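/- arXiv:2312.08544 — 5 statements merged into one kernel-verified Lean document; each statement's English description precedes it below -/
import Mathlib

section
/- For every natural number D, every ε > 0, every T₀ > 0, and every function f from the primes ≤ D to the unit circle S¹ ⊆ ℂ, there exists a real number T > T₀ such that |p^{iT} − f(p)| ≤ ε for all primes p ≤ D. -/
open Complex Finset

namespace SimultaneousApprox

noncomputable section
open scoped Classical

def Sf (D : ℕ) : Finset ℕ := (Finset.range (D+1)).filter Nat.Prime
def S' (D : ℕ) : Finset ℕ := insert 1 (Sf D)
def cc (f : ℕ → ℂ) (q : ℕ) : ℂ := if q = 1 then 1 else (starRingEnd ℂ) (f q)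
def aa (f : ℕ → ℂ) (q : ℕ) (T : ℝ) : ℂ :=
  cc f q * Complex.exp (Complex.I * T * Real.log q)
def Psi (D : ℕ) (f : ℕ → ℂ) (T : ℝ) : ℂ := ∑ q ∈ S' D, aa f q T
def P {m : ℕ} (s : Fin m → ℕ) : ℕ := ∏ i, s i
def LL {m : ℕ} (s : Fin m → ℕ) : ℝ := Real.log (P s)
def CC (f : ℕ → ℂ) {m : ℕ} (s : Fin m → ℕ) : ℂ := ∏ i, cc f (s i)
def Tup (D m : ℕ) : Finset (Fin m → ℕ) := Fintype.piFinset (fun _ => S' D)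
def cnt {m : ℕ} (s : Fin m → ℕ) (q : ℕ) : ℕ := (univ.filter (fun i => s i = q)).card

variable {D m : ℕ} {f : ℕ → ℂ}

lemma mem_Sf {q : ℕ} : q ∈ Sf D ↔ q.Prime ∧ q ≤ D := by
  simp [Sf, Nat.lt_succ_iff, and_comm]

lemma prime_of_mem_S' {q : ℕ} (h : q ∈ S' D) (h1 : q ≠ 1) : q.Prime ∧ q ≤ D := by
  rcases Finset.mem_insert.1 h with h | h
  · exact absurd h h1
  · exact mem_Sf.1 h

lemma one_le_of_mem_S' {q : ℕ} (h : q ∈ S' D) : 1 ≤ q := by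
  by_cases h1 : q = 1
  · omega
  · exact le_of_lt (prime_of_mem_S' h h1).1.one_lt

lemma norm_cc (hf : ∀ p : ℕ, p.Prime → p ≤ D → ‖f p‖ = 1) {q : ℕ} (hq : q ∈ S' D) :
    ‖cc f q‖ = 1 := by
  by_cases h1 : q = 1
  · simp [cc, h1]
  · obtain ⟨hp, hle⟩ := prime_of_mem_S' hq h1
    rw [cc, if_neg h1, RCLike.norm_conj, hf q hp hle]

lemma norm_exp_I_mul (T w : ℝ) : ‖Complex.exp (Complex.I * T * w)‖ = 1 := by
  rw [Complex.norm_exp]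
  simp [Complex.mul_re]

lemma norm_aa (hf : ∀ p : ℕ, p.Prime → p ≤ D → ‖f p‖ = 1) {q : ℕ} (hq : q ∈ S' D) (T : ℝ) :
    ‖aa f q T‖ = 1 := by
  rw [aa, norm_mul, norm_cc hf hq, norm_exp_I_mul, mul_one]

lemma aa_one (T : ℝ) : aa f 1 T = 1 := by simp [aa, cc]

lemma P_pos {s : Fin m → ℕ} (hs : ∀ i, s i ∈ S' D) : 0 < P s :=
  Finset.prod_pos fun i _ => one_le_of_mem_S' (hs i)

lemma prod_aa {s : Fin m → ℕ} (hs : ∀ i, s i ∈ S' D) (T : ℝ) :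
    ∏ i, aa f (s i) T = CC f s * Complex.exp (Complex.I * T * LL s) := by
  unfold aa CC LL
  rw [Finset.prod_mul_distrib, ← Complex.exp_sum]
  congr 1
  have : Real.log (P s) = ∑ i, Real.log (s i) := by
    rw [P, Nat.cast_prod, Real.log_prod]
    intro i _
    have := one_le_of_mem_S' (hs i); exact Nat.cast_ne_zero.2 (by omega)
  rw [this]
  push_cast
  rw [Finset.mul_sum]

lemma Psi_pow (T : ℝ) :
    (Psi D f T) ^ m = ∑ s ∈ Tup D m, CC f s * Complex.exp (Complex.I * T * LL s) := by
  have : (Psi D f T) ^ m = ∏ _i : Fin m, Psi D f T := by simp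
  rw [this, Psi, Finset.prod_univ_sum]
  exact Finset.sum_congr rfl fun s hs =>
    prod_aa (fun i => (Fintype.mem_piFinset.1 hs) i) T

lemma conj_Psi_pow (T : ℝ) :
    (starRingEnd ℂ) ((Psi D f T) ^ m) =
      ∑ t ∈ Tup D m, (starRingEnd ℂ) (CC f t) * Complex.exp (-(Complex.I * T * LL t)) := by
  rw [Psi_pow, map_sum]
  refine Finset.sum_congr rfl fun t _ => ?_
  rw [map_mul, ← Complex.exp_conj]
  congr 1
  simp [map_mul, Complex.conj_ofReal]

lemma theta_expand (T : ℝ) :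
    ((Psi D f T) * (starRingEnd ℂ) (Psi D f T)) ^ m =
      ∑ st ∈ (Tup D m) ×ˢ (Tup D m),
        (CC f st.1 * (starRingEnd ℂ) (CC f st.2)) *
          Complex.exp (Complex.I * (LL st.1 - LL st.2) * T) := by
  rw [mul_pow, ← map_pow, conj_Psi_pow, Psi_pow, Finset.sum_mul_sum, Finset.sum_product]
  refine Finset.sum_congr rfl fun s _ => Finset.sum_congr rfl fun t _ => ?_
  rw [mul_mul_mul_comm, ← Complex.exp_add]
  congr 1
  push_cast
  ring

lemma theta_real (T : ℝ) :
    ((Psi D f T) * (starRingEnd ℂ) (Psi D f T)) ^ m = ((‖Psi D f T‖ ^ (2*m) : ℝ) : ℂ) := by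
  rw [Complex.mul_conj, ← Complex.ofReal_pow]
  congr 1
  rw [Complex.normSq_eq_norm_sq, ← pow_mul]

lemma factorization_P {s : Fin m → ℕ} (hs : ∀ i, s i ∈ S' D) {q : ℕ} (hq : q.Prime) :
    (P s).factorization q = cnt s q := by
  have h0 : ∀ i ∈ (univ : Finset (Fin m)), s i ≠ 0 := fun i _ => by
    have := one_le_of_mem_S' (hs i); omega
  rw [P, Nat.factorization_prod h0, Finset.sum_apply', cnt, Finset.card_filter]
  refine Finset.sum_congr rfl fun i _ => ?_
  by_cases h1 : s i = 1
  · have hne : ¬ (1 : ℕ) = q := fun h => hq.ne_one h.symm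
    rw [h1, Nat.factorization_one, if_neg hne]
    rfl
  · have hp := (prime_of_mem_S' (hs i) h1).1
    rw [hp.factorization, Finsupp.single_apply]

lemma cnt_partition {s : Fin m → ℕ} (hs : ∀ i, s i ∈ S' D) :
    cnt s 1 + ∑ q ∈ Sf D, cnt s q = m := by
  have h1 : (1 : ℕ) ∉ Sf D := fun h => Nat.not_prime_one (mem_Sf.1 h).1
  have := Finset.card_eq_sum_card_fiberwise (f := s) (t := S' D)
    (s := (univ : Finset (Fin m))) (fun i _ => hs i)
  rw [Finset.card_univ, Fintype.card_fin] at this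
  rw [S', Finset.sum_insert h1] at this
  simp only [cnt]
  exact this.symm

lemma cnt_eq_zero {s : Fin m → ℕ} (hs : ∀ i, s i ∈ S' D) {q : ℕ} (hq : q ∉ S' D) :
    cnt s q = 0 := by
  rw [cnt, Finset.card_eq_zero, Finset.filter_eq_empty_iff]
  rintro i - rfl
  exact hq (hs i)

lemma cnt_eq_of_P_eq {s t : Fin m → ℕ} (hs : ∀ i, s i ∈ S' D) (ht : ∀ i, t i ∈ S' D)
    (h : P s = P t) : cnt s = cnt t := by
  have hprime : ∀ q : ℕ, q.Prime → cnt s q = cnt t q := fun q hq => by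
    rw [← factorization_P hs hq, ← factorization_P ht hq, h]
  funext q
  by_cases hq : q ∈ S' D
  · by_cases h1 : q = 1
    · subst h1
      have e1 := cnt_partition hs
      have e2 := cnt_partition ht
      have : ∑ q ∈ Sf D, cnt s q = ∑ q ∈ Sf D, cnt t q :=
        Finset.sum_congr rfl fun q hq => hprime q (mem_Sf.1 hq).1
      omega
    · exact hprime q (prime_of_mem_S' hq h1).1
  · rw [cnt_eq_zero hs hq, cnt_eq_zero ht hq]

lemma P_fiber {s : Fin m → ℕ} (hs : ∀ i, s i ∈ S' D) :
    P s = ∏ q ∈ S' D, q ^ cnt s q := by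
  rw [P, ← Finset.prod_fiberwise_of_maps_to (g := s) (fun i _ => hs i)]
  refine Finset.prod_congr rfl fun q _ => ?_
  rw [cnt, ← Finset.prod_const]
  exact Finset.prod_congr rfl fun i hi => (Finset.mem_filter.1 hi).2

lemma CC_fiber {s : Fin m → ℕ} (hs : ∀ i, s i ∈ S' D) :
    CC f s = ∏ q ∈ S' D, (cc f q) ^ cnt s q := by
  rw [CC, ← Finset.prod_fiberwise_of_maps_to (g := s) (fun i _ => hs i)]
  refine Finset.prod_congr rfl fun q _ => ?_
  rw [cnt, ← Finset.prod_const]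
  exact Finset.prod_congr rfl fun i hi => by rw [(Finset.mem_filter.1 hi).2]

lemma P_eq_of_cnt_eq {s t : Fin m → ℕ} (hs : ∀ i, s i ∈ S' D) (ht : ∀ i, t i ∈ S' D)
    (h : cnt s = cnt t) : P s = P t := by
  rw [P_fiber hs, P_fiber ht, h]

lemma CC_eq_of_cnt_eq {s t : Fin m → ℕ} (hs : ∀ i, s i ∈ S' D) (ht : ∀ i, t i ∈ S' D)
    (h : cnt s = cnt t) : CC f s = CC f t := by
  rw [CC_fiber hs, CC_fiber ht, h]

lemma LL_inj {s t : Fin m → ℕ} (hs : ∀ i, s i ∈ S' D) (ht : ∀ i, t i ∈ S' D)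
    (h : LL s = LL t) : cnt s = cnt t := by
  refine cnt_eq_of_P_eq hs ht ?_
  have h1 : (0:ℝ) < P s := by exact_mod_cast P_pos hs
  have h2 : (0:ℝ) < P t := by exact_mod_cast P_pos ht
  exact_mod_cast Real.log_injOn_pos (Set.mem_Ioi.2 h1) (Set.mem_Ioi.2 h2) h

def fib (D m : ℕ) (g : ℕ → ℕ) : Finset (Fin m → ℕ) := (Tup D m).filter (fun t => cnt t = g)
def G (D m : ℕ) : Finset (ℕ → ℕ) := (Tup D m).image (fun s => cnt s)
def Dg (D m : ℕ) : ℕ :=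
  (((Tup D m) ×ˢ (Tup D m)).filter (fun st => cnt st.1 = cnt st.2)).card

lemma mem_Tup {s : Fin m → ℕ} (h : s ∈ Tup D m) : ∀ i, s i ∈ S' D :=
  fun i => Fintype.mem_piFinset.1 h i

lemma cnt_le (s : Fin m → ℕ) (q : ℕ) : cnt s q ≤ m := by
  simpa [cnt] using (Finset.card_filter_le (univ : Finset (Fin m)) (fun i => s i = q))

lemma card_G_le : (G D m).card ≤ (m+1) ^ (S' D).card := by
  classical
  have hinj : Set.InjOn
      (fun (g : ℕ → ℕ) => (fun q : {x // x ∈ S' D} => (⟨min (g q) m, by omega⟩ : Fin (m+1))))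
      (G D m) := by
    intro g hg g' hg' h
    obtain ⟨s, hs, rfl⟩ := Finset.mem_image.1 hg
    obtain ⟨t, ht, rfl⟩ := Finset.mem_image.1 hg'
    funext q
    by_cases hq : q ∈ S' D
    · have := congrFun h ⟨q, hq⟩
      have h1 : min (cnt s q) m = min (cnt t q) m := by
        simpa [Fin.ext_iff] using this
      rw [min_eq_left (cnt_le s q), min_eq_left (cnt_le t q)] at h1
      exact h1
    · rw [cnt_eq_zero (mem_Tup hs) hq, cnt_eq_zero (mem_Tup ht) hq]
  have := Finset.card_le_card_of_injOn _ (fun g _ => Finset.mem_univ _) hinj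
  rwa [Finset.card_univ, Fintype.card_fun, Fintype.card_fin, Fintype.card_coe] at this

lemma sum_fib : ∑ g ∈ G D m, (fib D m g).card = (S' D).card ^ m := by
  have := Finset.card_eq_sum_card_fiberwise
    (f := fun s => cnt s) (s := Tup D m) (t := G D m)
    (fun s hs => Finset.mem_image_of_mem _ hs)
  rw [Tup, Fintype.card_piFinset_const] at this
  exact this.symm

lemma Dg_eq : Dg D m = ∑ g ∈ G D m, (fib D m g).card ^ 2 := by
  classical
  rw [Dg, Finset.card_filter, Finset.sum_product]
  have step1 : ∀ s : Fin m → ℕ,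
      (∑ t ∈ Tup D m, if cnt s = cnt t then 1 else 0) = (fib D m (cnt s)).card := by
    intro s
    rw [fib, Finset.card_filter]
    exact Finset.sum_congr rfl fun t _ => by simp [eq_comm]
  simp_rw [step1]
  rw [← Finset.sum_fiberwise_of_maps_to (g := fun s => cnt s) (t := G D m)
    (fun s hs => Finset.mem_image_of_mem _ hs)]
  refine Finset.sum_congr rfl fun g hg => ?_
  rw [sq]
  have : ∀ s ∈ (Tup D m).filter (fun s => cnt s = g), (fib D m (cnt s)).card = (fib D m g).card :=
    fun s hs => by rw [(Finset.mem_filter.1 hs).2]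
  rw [Finset.sum_congr rfl this, Finset.sum_const, fib, smul_eq_mul]

lemma counting : ((S' D).card : ℝ) ^ (2*m) ≤ ((m+1) ^ (S' D).card : ℝ) * (Dg D m : ℝ) := by
  have cs := sq_sum_le_card_mul_sum_sq (s := G D m)
    (f := fun g => ((fib D m g).card : ℝ))
  have h1 : (∑ g ∈ G D m, ((fib D m g).card : ℝ)) = ((S' D).card : ℝ) ^ m := by
    rw [← Nat.cast_sum]
    exact_mod_cast congrArg (Nat.cast : ℕ → ℝ) sum_fib
  have h2 : (∑ g ∈ G D m, ((fib D m g).card : ℝ) ^ 2) = (Dg D m : ℝ) := by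
    rw [Dg_eq]
    push_cast
    rfl
  rw [h1, h2, ← pow_mul, mul_comm m 2] at cs
  calc ((S' D).card : ℝ) ^ (2*m) ≤ ((G D m).card : ℝ) * (Dg D m : ℝ) := cs
    _ ≤ ((m+1) ^ (S' D).card : ℝ) * (Dg D m : ℝ) := by
        have := card_G_le (D := D) (m := m)
        have hDg : (0:ℝ) ≤ (Dg D m : ℝ) := Nat.cast_nonneg _
        exact mul_le_mul_of_nonneg_right (by exact_mod_cast this) hDg

lemma norm_CC (hf : ∀ p : ℕ, p.Prime → p ≤ D → ‖f p‖ = 1) {s : Fin m → ℕ}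
    (hs : ∀ i, s i ∈ S' D) : ‖CC f s‖ = 1 := by
  rw [CC]
  rw [norm_prod]
  exact Finset.prod_eq_one fun i _ => norm_cc hf (hs i)

lemma mul_conj_CC_one (hf : ∀ p : ℕ, p.Prime → p ≤ D → ‖f p‖ = 1) {s : Fin m → ℕ}
    (hs : ∀ i, s i ∈ S' D) : CC f s * (starRingEnd ℂ) (CC f s) = 1 := by
  rw [Complex.mul_conj, Complex.normSq_eq_norm_sq, norm_CC hf hs]
  norm_num

lemma norm_J_le {w : ℝ} (hw : w ≠ 0) (A B : ℝ) :
    ‖∫ T in A..B, Complex.exp (Complex.I * w * T)‖ ≤ 2/|w| := by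
  have hc : (Complex.I * w) ≠ 0 := mul_ne_zero Complex.I_ne_zero (Complex.ofReal_ne_zero.2 hw)
  rw [integral_exp_mul_complex hc, norm_div]
  have h1 : ∀ x : ℝ, ‖Complex.exp (Complex.I * w * x)‖ = 1 := fun x => by
    rw [Complex.norm_exp]
    simp [Complex.mul_re]
  have h2 : ‖Complex.I * (w:ℂ)‖ = |w| := by
    rw [norm_mul, Complex.norm_I, one_mul, Complex.norm_real, Real.norm_eq_abs]
  rw [h2]
  have h3 : ‖Complex.exp (Complex.I * w * B) - Complex.exp (Complex.I * w * A)‖ ≤ 2 := by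
    calc ‖Complex.exp (Complex.I * w * B) - Complex.exp (Complex.I * w * A)‖
        ≤ ‖Complex.exp (Complex.I * w * B)‖ + ‖Complex.exp (Complex.I * w * A)‖ :=
          norm_sub_le _ _
      _ ≤ 2 := by rw [h1, h1]; norm_num
  have hwpos : (0:ℝ) < |w| := abs_pos.2 hw
  gcongr

lemma continuous_Psi : Continuous (Psi D f) := by
  unfold Psi aa
  exact continuous_finset_sum _ fun q _ => continuous_const.mul (by fun_prop)

lemma exists_big (hf : ∀ p : ℕ, p.Prime → p ≤ D → ‖f p‖ = 1) (m : ℕ) (A : ℝ) :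
    ∃ T, A ≤ T ∧ (Dg D m : ℝ) - 1 ≤ ‖Psi D f T‖ ^ (2*m) := by
  classical
  set Od := ((Tup D m) ×ˢ (Tup D m)).filter (fun st => ¬ (cnt st.1 = cnt st.2)) with hOd
  set B : ℝ := ∑ st ∈ Od, 2/|LL st.1 - LL st.2| with hB
  have hBnn : 0 ≤ B := Finset.sum_nonneg fun st _ => by positivity
  set X : ℝ := B + 1 with hX
  have hXpos : (0:ℝ) < X := by linarith
  have hg : Continuous (fun T => ‖Psi D f T‖ ^ (2*m)) := (continuous_Psi.norm).pow _
  have key : (Dg D m : ℝ) * X - B ≤ ∫ T in A..(A+X), ‖Psi D f T‖ ^ (2*m) := by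
    have hpt : Set.EqOn (fun T : ℝ => ((‖Psi D f T‖ ^ (2*m) : ℝ) : ℂ))
        (fun T : ℝ => ∑ st ∈ (Tup D m) ×ˢ (Tup D m),
          (CC f st.1 * (starRingEnd ℂ) (CC f st.2)) *
            Complex.exp (Complex.I * (LL st.1 - LL st.2) * T)) (Set.uIcc A (A+X)) :=
      fun T _ => by dsimp only; rw [← theta_real, theta_expand]
    have h1 : ((∫ T in A..(A+X), ‖Psi D f T‖ ^ (2*m) : ℝ) : ℂ) =
        ∑ st ∈ (Tup D m) ×ˢ (Tup D m),
          (CC f st.1 * (starRingEnd ℂ) (CC f st.2)) *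
            ∫ T in A..(A+X), Complex.exp (Complex.I * (LL st.1 - LL st.2) * T) := by
      rw [← intervalIntegral.integral_ofReal, intervalIntegral.integral_congr hpt,
        intervalIntegral.integral_finset_sum
          (fun st _ => (Continuous.intervalIntegrable (by fun_prop) _ _))]
      exact Finset.sum_congr rfl fun st _ => intervalIntegral.integral_const_mul _ _
    have h2 : (∫ T in A..(A+X), ‖Psi D f T‖ ^ (2*m)) =
        ∑ st ∈ (Tup D m) ×ˢ (Tup D m),
          ((CC f st.1 * (starRingEnd ℂ) (CC f st.2)) *
            ∫ T in A..(A+X), Complex.exp (Complex.I * (LL st.1 - LL st.2) * T)).re := by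
      rw [← Complex.re_sum, ← h1, Complex.ofReal_re]
    rw [h2, ← Finset.sum_filter_add_sum_filter_not ((Tup D m) ×ˢ (Tup D m))
      (fun st => cnt st.1 = cnt st.2)]
    have diag : ∀ st ∈ ((Tup D m) ×ˢ (Tup D m)).filter (fun st => cnt st.1 = cnt st.2),
        ((CC f st.1 * (starRingEnd ℂ) (CC f st.2)) *
          ∫ T in A..(A+X), Complex.exp (Complex.I * (LL st.1 - LL st.2) * T)).re = X := by
      rintro ⟨s, t⟩ hst
      obtain ⟨hmem, hcnt⟩ := Finset.mem_filter.1 hst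
      obtain ⟨hs, ht⟩ := Finset.mem_product.1 hmem
      have hs' := mem_Tup hs
      have ht' := mem_Tup ht
      have hL : LL t = LL s := by
        simp only [LL]
        rw [P_eq_of_cnt_eq ht' hs' hcnt.symm]
      have hCC : CC f t = CC f s := CC_eq_of_cnt_eq ht' hs' hcnt.symm
      simp only [hL, hCC, sub_self, Complex.ofReal_zero, mul_zero, zero_mul,
        Complex.exp_zero, mul_comm]
      rw [intervalIntegral.integral_const, mul_conj_CC_one hf hs']
      simp
    rw [Finset.sum_congr rfl diag, Finset.sum_const, nsmul_eq_mul]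
    have hcard : (((Tup D m) ×ˢ (Tup D m)).filter (fun st => cnt st.1 = cnt st.2)).card
        = Dg D m := rfl
    rw [hcard]
    have off : ∀ st ∈ Od,
        -(2/|LL st.1 - LL st.2|) ≤ ((CC f st.1 * (starRingEnd ℂ) (CC f st.2)) *
          ∫ T in A..(A+X), Complex.exp (Complex.I * (LL st.1 - LL st.2) * T)).re := by
      rintro ⟨s, t⟩ hst
      obtain ⟨hmem, hcnt⟩ := Finset.mem_filter.1 hst
      obtain ⟨hs, ht⟩ := Finset.mem_product.1 hmem
      have hs' := mem_Tup hs
      have ht' := mem_Tup ht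
      have hw : LL s - LL t ≠ 0 := by
        intro h
        exact hcnt (LL_inj hs' ht' (by linarith [sub_eq_zero.1 h]))
      have hnorm : ‖(CC f s * (starRingEnd ℂ) (CC f t)) *
          ∫ T in A..(A+X), Complex.exp (Complex.I * ((LL s - LL t : ℝ) : ℂ) * T)‖
          ≤ 2/|LL s - LL t| := by
        rw [norm_mul, norm_mul, norm_CC hf hs', RCLike.norm_conj, norm_CC hf ht',
          one_mul, one_mul]
        exact norm_J_le hw A (A+X)
      have := neg_abs_le (((CC f s * (starRingEnd ℂ) (CC f t)) *
          ∫ T in A..(A+X), Complex.exp (Complex.I * ((LL s - LL t : ℝ) : ℂ) * T)).re)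
      have habs := Complex.abs_re_le_norm ((CC f s * (starRingEnd ℂ) (CC f t)) *
          ∫ T in A..(A+X), Complex.exp (Complex.I * ((LL s - LL t : ℝ) : ℂ) * T))
      push_cast
      push_cast at this habs hnorm
      linarith
    have hoff : -B ≤ ∑ st ∈ Od, ((CC f st.1 * (starRingEnd ℂ) (CC f st.2)) *
        ∫ T in A..(A+X), Complex.exp (Complex.I * (LL st.1 - LL st.2) * T)).re := by
      rw [hB, ← Finset.sum_neg_distrib]
      exact Finset.sum_le_sum off
    linarith [hoff]
  by_contra hcon
  push_neg at hcon
  have hub : ∀ T ∈ Set.Icc A (A+X), ‖Psi D f T‖ ^ (2*m) ≤ (Dg D m : ℝ) - 1 :=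
    fun T hT => le_of_lt (hcon T hT.1)
  have hmono := intervalIntegral.integral_mono_on (μ := MeasureTheory.volume) (by linarith : A ≤ A + X)
    (hg.intervalIntegrable _ _) (intervalIntegrable_const) hub
  rw [intervalIntegral.integral_const, smul_eq_mul] at hmono
  have : (Dg D m : ℝ) * X - B ≤ (A + X - A) * ((Dg D m : ℝ) - 1) := le_trans key hmono
  have hDg : (0:ℝ) ≤ (Dg D m : ℝ) := Nat.cast_nonneg _
  nlinarith

lemma aux_tendsto {r : ℝ} (hr0 : 0 ≤ r) (hr1 : r < 1) (K : ℕ) :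
    Filter.Tendsto (fun n : ℕ => ((n:ℝ)+1)^K * r^n) Filter.atTop (nhds 0) := by
  have t := tendsto_pow_const_mul_const_pow_of_lt_one K hr0 hr1
  have t2 : Filter.Tendsto (fun n : ℕ => (2:ℝ)^K * ((n:ℝ)^K * r^n)) Filter.atTop (nhds 0) := by
    simpa using t.const_mul ((2:ℝ)^K)
  apply squeeze_zero' ?_ ?_ t2
  · filter_upwards with n
    positivity
  · filter_upwards [Filter.eventually_ge_atTop 1] with n hn
    have hn' : (1:ℝ) ≤ (n:ℝ) := by exact_mod_cast hn
    have h1 : ((n:ℝ)+1)^K ≤ ((2:ℝ)*n)^K :=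
      pow_le_pow_left₀ (by positivity) (by linarith) K
    calc ((n:ℝ)+1)^K * r^n ≤ ((2:ℝ)*n)^K * r^n :=
          mul_le_mul_of_nonneg_right h1 (by positivity)
      _ = (2:ℝ)^K * ((n:ℝ)^K * r^n) := by rw [mul_pow]; ring

lemma exists_m {K : ℕ} (hK : 2 ≤ K) {δ : ℝ} (hδ : 0 < δ) (hδ1 : δ ≤ 1) :
    ∃ m : ℕ, 0 < m ∧ (((K:ℝ) - δ) ^ (2*m) + 1) * ((m:ℝ)+1) ^ K ≤ (K:ℝ) ^ (2*m) := by
  have hK2 : (2:ℝ) ≤ K := by exact_mod_cast hK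
  have hKpos : (0:ℝ) < K := by linarith
  set u : ℝ := ((K:ℝ) - δ) / K with hu
  have hu0 : 0 ≤ u := div_nonneg (by linarith) (by linarith)
  have hu1 : u < 1 := by rw [hu, div_lt_one hKpos]; linarith
  have e1 := (aux_tendsto (sq_nonneg u) (by nlinarith) K).eventually_lt_const
    (by norm_num : (0:ℝ) < 1/2)
  have e2 := (aux_tendsto (r := 1/(K:ℝ)^2) (by positivity)
    (by rw [div_lt_one (by positivity)]; nlinarith) K).eventually_lt_const
    (by norm_num : (0:ℝ) < 1/2)
  obtain ⟨m, ⟨h1, h2⟩, hm1⟩ := ((e1.and e2).and (Filter.eventually_ge_atTop 1)).exists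
  refine ⟨m, by omega, ?_⟩
  have hKm : (0:ℝ) < (K:ℝ)^(2*m) := by positivity
  have hKu : (K:ℝ) - δ = K * u := by rw [hu]; field_simp
  have e : ((K:ℝ)-δ)^(2*m) = (K:ℝ)^(2*m) * (u^2)^m := by
    rw [hKu, mul_pow, pow_mul u]
  have h2' : ((m:ℝ)+1)^K ≤ (K:ℝ)^(2*m) / 2 := by
    have hrw : (1/(K:ℝ)^2)^m = 1/(K:ℝ)^(2*m) := by
      rw [div_pow, one_pow, ← pow_mul]
    rw [hrw, mul_one_div, div_lt_iff₀ hKm] at h2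
    linarith
  have step1 : (K:ℝ)^(2*m) * (((m:ℝ)+1)^K * (u^2)^m) ≤ (K:ℝ)^(2*m) * (1/2) :=
    mul_le_mul_of_nonneg_left h1.le hKm.le
  rw [e]
  nlinarith [step1, h2']

lemma align (hf : ∀ p : ℕ, p.Prime → p ≤ D → ‖f p‖ = 1) {T δ : ℝ} (hδ0 : 0 ≤ δ) (hδ1 : δ ≤ 1)
    (h : ((S' D).card : ℝ) - δ ≤ ‖Psi D f T‖) {q : ℕ} (hq : q ∈ S' D) :
    ‖aa f q T - 1‖^2 ≤ 4*δ := by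
  by_cases h1 : q = 1
  · subst h1
    rw [aa_one]
    simp only [sub_self, norm_zero]
    nlinarith
  · have hone : (1:ℕ) ∈ S' D := Finset.mem_insert_self _ _
    have hq1 : (1:ℕ) ∈ (S' D).erase q := Finset.mem_erase.2 ⟨fun hh => h1 hh.symm, hone⟩
    have hKcard : 2 ≤ (S' D).card := by
      have hsub : ({1, q} : Finset ℕ) ⊆ S' D := by
        intro x hx
        rcases Finset.mem_insert.1 hx with rfl | hx
        · exact hone
        · rwa [Finset.mem_singleton.1 hx]
      have : ({1, q} : Finset ℕ).card = 2 := by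
        rw [Finset.card_insert_of_notMem (by simpa using fun hh => h1 hh.symm),
          Finset.card_singleton]
      rw [← this]
      exact Finset.card_le_card hsub
    have hsplit : Psi D f T = (aa f q T + 1) + ∑ r ∈ ((S' D).erase q).erase 1, aa f r T := by
      rw [Psi, ← Finset.add_sum_erase _ _ hq, ← Finset.add_sum_erase _ _ hq1, aa_one]
      ring
    have hcard2 : (((S' D).erase q).erase 1).card = (S' D).card - 2 := by
      rw [Finset.card_erase_of_mem hq1, Finset.card_erase_of_mem hq, Nat.sub_sub]
    have hrest : ‖∑ r ∈ ((S' D).erase q).erase 1, aa f r T‖ ≤ ((S' D).card : ℝ) - 2 := by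
      calc ‖∑ r ∈ ((S' D).erase q).erase 1, aa f r T‖
          ≤ ∑ r ∈ ((S' D).erase q).erase 1, ‖aa f r T‖ := norm_sum_le _ _
        _ = (((S' D).erase q).erase 1).card := by
            rw [Finset.sum_congr rfl (fun r hr => norm_aa hf
              (Finset.mem_of_mem_erase (Finset.mem_of_mem_erase hr)) T),
              Finset.sum_const, nsmul_eq_mul, mul_one]
        _ ≤ ((S' D).card : ℝ) - 2 := by
            rw [hcard2]
            rw [Nat.cast_sub hKcard]
            norm_num
    have h3 : 2 - δ ≤ ‖aa f q T + 1‖ := by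
      have := norm_add_le (aa f q T + 1) (∑ r ∈ ((S' D).erase q).erase 1, aa f r T)
      rw [← hsplit] at this
      linarith
    have h4 : (2 - δ)^2 ≤ ‖aa f q T + 1‖^2 := pow_le_pow_left₀ (by linarith) h3 2
    have hz : ‖aa f q T‖ = 1 := norm_aa hf hq T
    have hnsq : Complex.normSq (aa f q T) = 1 := by
      rw [← Complex.sq_norm, hz, one_pow]
    have e1 : ‖aa f q T + 1‖^2 = 2 + 2*(aa f q T).re := by
      rw [Complex.sq_norm, Complex.normSq_add, hnsq]
      simp
      ring
    have e2 : ‖aa f q T - 1‖^2 = 2 - 2*(aa f q T).re := by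
      rw [Complex.sq_norm, Complex.normSq_sub, hnsq]
      simp
      ring
    rw [e2]
    rw [e1] at h4
    nlinarith

end

end SimultaneousApprox

open SimultaneousApprox

/-- For every `D`, `ε > 0`, `T₀ > 0` and every function `f` from the primes `≤ D` to the
unit circle in `ℂ`, there is `T > T₀` with `|p^{iT} - f p| ≤ ε` for all primes `p ≤ D`,
where `p^{iT} = exp(i T log p)`. -/
theorem simultaneous_approx_primes (D : ℕ) (ε T₀ : ℝ) (hε : 0 < ε) (hT₀ : 0 < T₀)
    (f : ℕ → ℂ) (hf : ∀ p : ℕ, p.Prime → p ≤ D → ‖f p‖ = 1) :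
    ∃ T : ℝ, T₀ < T ∧ ∀ p : ℕ, p.Prime → p ≤ D →
      ‖Complex.exp (Complex.I * T * Real.log p) - f p‖ ≤ ε := by
  classical
  by_cases hD : Sf D = ∅
  · exact ⟨T₀ + 1, by linarith, fun p hp hpD =>
      absurd (mem_Sf.2 ⟨hp, hpD⟩) (by simp [hD])⟩
  · have h1S : (1:ℕ) ∉ Sf D := fun h => Nat.not_prime_one (mem_Sf.1 h).1
    have hK : 2 ≤ (S' D).card := by
      rw [S', Finset.card_insert_of_notMem h1S]
      have := Finset.card_pos.2 (Finset.nonempty_of_ne_empty hD)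
      omega
    set δ : ℝ := min 1 (ε^2/4) with hδdef
    have hδ0 : 0 < δ := lt_min one_pos (by positivity)
    have hδ1 : δ ≤ 1 := min_le_left _ _
    obtain ⟨m, hm, hmain⟩ := exists_m hK hδ0 hδ1
    obtain ⟨T, hT, hTbig⟩ := exists_big (D := D) (f := f) hf m (T₀ + 1)
    have hKbound : ((((S' D).card : ℝ)) - δ) ^ (2*m) + 1 ≤ (Dg D m : ℝ) := by
      have hc := counting (D := D) (m := m)
      have hpos : (0:ℝ) < ((m:ℝ)+1)^(S' D).card := by positivity
      have hcast : ((m+1 : ℕ) : ℝ) ^ (S' D).card = ((m:ℝ)+1)^(S' D).card := by push_cast; rfl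
      have h := hmain.trans hc
      have h' : ((((S' D).card : ℝ) - δ) ^ (2*m) + 1) * ((m:ℝ)+1)^(S' D).card
          ≤ (Dg D m : ℝ) * ((m:ℝ)+1)^(S' D).card := by
        calc ((((S' D).card : ℝ) - δ) ^ (2*m) + 1) * ((m:ℝ)+1)^(S' D).card
            ≤ ((m+1) ^ (S' D).card : ℝ) * (Dg D m : ℝ) := h
          _ = (Dg D m : ℝ) * ((m:ℝ)+1)^(S' D).card := by push_cast; ring
      exact le_of_mul_le_mul_right h' hpos
    have hPsiBig : ((S' D).card : ℝ) - δ ≤ ‖Psi D f T‖ := by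
      by_contra hlt
      push_neg at hlt
      have hpow := pow_lt_pow_left₀ hlt (norm_nonneg _)
        (by omega : 2*m ≠ 0)
      linarith
    refine ⟨T, by linarith, fun p hp hpD => ?_⟩
    have hpS' : p ∈ S' D := Finset.mem_insert_of_mem (mem_Sf.2 ⟨hp, hpD⟩)
    have hal := align hf hδ0.le hδ1 hPsiBig hpS'
    have hp1 : p ≠ 1 := hp.ne_one
    have hfp : ‖f p‖ = 1 := hf p hp hpD
    have hconj : (starRingEnd ℂ) (f p) * f p = 1 := by
      rw [mul_comm, Complex.mul_conj, Complex.normSq_eq_norm_sq, hfp]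
      norm_num
    have hrw : Complex.exp (Complex.I * T * Real.log p) - f p = (aa f p T - 1) * f p := by
      rw [aa, cc, if_neg hp1]
      linear_combination (-Complex.exp (Complex.I * (T:ℂ) * (Real.log p : ℂ))) * hconj
    rw [hrw, norm_mul, hfp, mul_one]
    have h4 : 4*δ ≤ ε^2 := by
      have := min_le_right (1:ℝ) (ε^2/4)
      have hδle : δ ≤ ε^2/4 := by rw [hδdef]; exact this
      linarith
    nlinarith [norm_nonneg (aa f p T - 1), hal, hε]
end

section
/- For every natural number D, every ε > 0, and every T₀ > 0, there exists T > T₀ such that |p^{iT} − 1| ≤ ε for all primes p ≤ D. -/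
open Finset in
lemma dirichlet_simul (k : ℕ) (v : Fin k → ℝ) {δ : ℝ} (hδ : 0 < δ) :
    ∃ d : ℕ, 0 < d ∧ ∀ i, ∃ m : ℤ, |d * v i - m| < δ := by
  obtain ⟨N, hN⟩ := exists_nat_gt (1/δ)
  have hN0 : 0 < N := by
    by_contra h
    push_neg at h
    interval_cases N
    simp at hN; linarith [one_div_pos.mpr hδ]
  have hNR : (0:ℝ) < N := by exact_mod_cast hN0
  set f : ℕ → (Fin k → ℕ) := fun n i => (⌊(N:ℝ) * Int.fract (n * v i)⌋).toNat with hf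
  have hmaps : ∀ n ∈ Finset.range (N^k + 1), f n ∈ Fintype.piFinset fun _ : Fin k => Finset.range N := by
    intro n _
    simp only [Fintype.mem_piFinset, Finset.mem_range]
    intro i
    have h0 : 0 ≤ ⌊(N:ℝ) * Int.fract (n * v i)⌋ :=
      Int.floor_nonneg.mpr (mul_nonneg (by positivity) (Int.fract_nonneg _))
    have h1 : ⌊(N:ℝ) * Int.fract (n * v i)⌋ < N := by
      apply Int.floor_lt.mpr
      push_cast
      nlinarith [Int.fract_lt_one ((n:ℝ) * v i), Int.fract_nonneg ((n:ℝ) * v i)]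
    have h2 := Int.toNat_of_nonneg h0
    simp only [hf]
    omega
  have hcard : (Fintype.piFinset fun _ : Fin k => Finset.range N).card < (Finset.range (N^k+1)).card := by
    simp [Finset.card_range]
  obtain ⟨a, ha, b, hb, hab, hfab⟩ :=
    Finset.exists_ne_map_eq_of_card_lt_of_maps_to hcard hmaps
  wlog hlt : a < b generalizing a b
  · exact this b hb a ha hab.symm hfab.symm (by omega)
  refine ⟨b - a, by omega, fun i => ?_⟩
  have hfl : ⌊(N:ℝ) * Int.fract (a * v i)⌋ = ⌊(N:ℝ) * Int.fract (b * v i)⌋ := by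
    have h1 : 0 ≤ ⌊(N:ℝ) * Int.fract (a * v i)⌋ :=
      Int.floor_nonneg.mpr (mul_nonneg (by positivity) (Int.fract_nonneg _))
    have h2 : 0 ≤ ⌊(N:ℝ) * Int.fract (b * v i)⌋ :=
      Int.floor_nonneg.mpr (mul_nonneg (by positivity) (Int.fract_nonneg _))
    have h3 := congrFun hfab i
    simp only [hf] at h3
    omega
  set x := Int.fract ((a:ℝ) * v i) with hxdef
  set y := Int.fract ((b:ℝ) * v i) with hydef
  have hxy : |y - x| < 1 / N := by
    have h1 := Int.floor_le ((N:ℝ) * x)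
    have h2 := Int.lt_floor_add_one ((N:ℝ) * x)
    have h3 := Int.floor_le ((N:ℝ) * y)
    have h4 := Int.lt_floor_add_one ((N:ℝ) * y)
    rw [hfl] at h1 h2
    rw [abs_sub_lt_iff]
    constructor <;> (rw [lt_div_iff₀ hNR]; nlinarith)
  refine ⟨⌊(b:ℝ) * v i⌋ - ⌊(a:ℝ) * v i⌋, ?_⟩
  have hbv : ((b:ℝ)) * v i = ⌊(b:ℝ) * v i⌋ + y := (Int.floor_add_fract _).symm
  have hav : ((a:ℝ)) * v i = ⌊(a:ℝ) * v i⌋ + x := (Int.floor_add_fract _).symm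
  have hd : ((b - a : ℕ) : ℝ) * v i = ((b:ℝ) - a) * v i := by
    push_cast [Nat.cast_sub hlt.le]; ring
  have h1N : 1 / (N:ℝ) < δ := by
    rw [div_lt_iff₀ hNR]
    have := (div_lt_iff₀ hδ).mp hN
    linarith
  have hexp : ((b:ℝ) - a) * v i = (b:ℝ) * v i - (a:ℝ) * v i := by ring
  calc |((b-a:ℕ):ℝ) * v i - ((⌊(b:ℝ) * v i⌋ - ⌊(a:ℝ) * v i⌋ : ℤ):ℝ)| = |y - x| := by
        rw [hd]; congr 1; push_cast; rw [hexp]; linarith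
  _ < 1 / N := hxy
  _ < δ := h1N

/-- For every `D`, `ε > 0`, `T₀ > 0` there is `T > T₀` such that `|p^{iT} - 1| ≤ ε`
for all primes `p ≤ D`, where `p^{iT} = exp(i T log p)`. -/
theorem simultaneous_approx_primes_one (D : ℕ) (ε T₀ : ℝ) (hε : 0 < ε) (hT₀ : 0 < T₀) :
    ∃ T : ℝ, T₀ < T ∧ ∀ p : ℕ, p.Prime → p ≤ D →
      ‖Complex.exp (Complex.I * T * Real.log p) - 1‖ ≤ ε := by
  have hπ := Real.pi_gt_three
  set L : ℕ := ⌈T₀⌉₊ + 1 with hLdef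
  have hLT : T₀ < L := by
    have := Nat.le_ceil T₀
    push_cast [hLdef]
    linarith
  have hLpos : (0:ℝ) < L := lt_trans hT₀ hLT
  have hmin : 0 < min ε 1 := lt_min hε one_pos
  set δ : ℝ := min ε 1 / (4 * Real.pi * L) with hδdef
  have hδ : 0 < δ := div_pos hmin (by positivity)
  obtain ⟨d, hd0, hm⟩ := dirichlet_simul (D+1)
    (fun i => Real.log (i : ℕ) / (2 * Real.pi)) hδ
  have hd1 : (1:ℝ) ≤ d := by exact_mod_cast hd0
  refine ⟨((L * d : ℕ) : ℝ), ?_, ?_⟩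
  · have h1 : ((L * d : ℕ) : ℝ) = (L:ℝ) * d := by rw [Nat.cast_mul]
    have h2 : (L:ℝ) ≤ (L:ℝ) * d := le_mul_of_one_le_right hLpos.le hd1
    rw [h1]; linarith
  intro p hp hpD
  obtain ⟨m, hme⟩ := hm ⟨p, by omega⟩
  simp only [Fin.val_mk] at hme
  set e : ℝ := d * (Real.log p / (2 * Real.pi)) - m with hedef
  have h2pi : (2:ℝ) * Real.pi ≠ 0 := by positivity
  have hlog : (d:ℝ) * Real.log p = 2 * Real.pi * m + 2 * Real.pi * e := by
    rw [hedef]; field_simp; ring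
  have hr : ((L * d : ℕ) : ℝ) * Real.log p
      = 2 * Real.pi * ((L:ℝ) * (m:ℝ)) + 2 * Real.pi * (L:ℝ) * e := by
    rw [Nat.cast_mul, mul_assoc, hlog]; ring
  have hsplit : Complex.I * ((L * d : ℕ) : ℝ) * (Real.log p : ℂ)
      = ((L * m : ℤ) : ℂ) * (2 * Real.pi * Complex.I)
        + ((2 * Real.pi * L * e : ℝ) : ℂ) * Complex.I := by
    calc Complex.I * (((L * d : ℕ) : ℝ) : ℂ) * ((Real.log p : ℝ) : ℂ)
        = ((((L * d : ℕ) : ℝ) * Real.log p : ℝ) : ℂ) * Complex.I := by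
          rw [Complex.ofReal_mul]; ring
    _ = ((2 * Real.pi * ((L:ℝ) * (m:ℝ)) + 2 * Real.pi * (L:ℝ) * e : ℝ) : ℂ) * Complex.I := by
          rw [hr]
    _ = ((L * m : ℤ) : ℂ) * (2 * Real.pi * Complex.I)
        + ((2 * Real.pi * L * e : ℝ) : ℂ) * Complex.I := by
          push_cast; ring
  rw [hsplit, Complex.exp_add, Complex.exp_int_mul_two_pi_mul_I, one_mul]
  have habs : ‖((2 * Real.pi * L * e : ℝ) : ℂ) * Complex.I‖
      = |2 * Real.pi * L * e| := by
    rw [norm_mul, Complex.norm_I, mul_one, Complex.norm_real, Real.norm_eq_abs]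
  have hebound : |e| < δ := hme
  have hkey : |2 * Real.pi * L * e| < min ε 1 / 2 := by
    rw [abs_mul]
    have h1 : |2 * Real.pi * (L:ℝ)| = 2 * Real.pi * L := abs_of_pos (by positivity)
    rw [h1]
    calc 2 * Real.pi * (L:ℝ) * |e| < 2 * Real.pi * L * δ := by
          apply mul_lt_mul_of_pos_left hebound (by positivity)
    _ = min ε 1 / 2 := by rw [hδdef]; field_simp; ring
  have hle1 : ‖((2 * Real.pi * L * e : ℝ) : ℂ) * Complex.I‖ ≤ 1 := by
    rw [habs]
    have : min ε 1 ≤ 1 := min_le_right _ _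
    linarith
  calc ‖Complex.exp (((2 * Real.pi * L * e : ℝ) : ℂ) * Complex.I) - 1‖
      ≤ 2 * ‖((2 * Real.pi * L * e : ℝ) : ℂ) * Complex.I‖ := by
        exact Complex.norm_exp_sub_one_le hle1
  _ ≤ ε := by have := min_le_left ε 1; rw [habs]; linarith
end

section
/- For every natural number D, every ε > 0, and every T₀ > 0, there exists T > T₀ such that for all primes p ≤ D with p ≡ 1 (mod 3) one has |p^{iT} − 1| ≤ ε, and for all primes p ≤ D with p ≡ 2 (mod 3) one has |p^{iT} + 1| ≤ ε. -/
open Finset Complex intervalIntegral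

lemma prod_pow_prime_inj (s : Finset ℕ) (hs : ∀ p ∈ s, p.Prime)
    (m m' : {x // x ∈ s} → ℕ)
    (h : ∏ i : {x // x ∈ s}, (i : ℕ) ^ m i = ∏ i : {x // x ∈ s}, (i : ℕ) ^ m' i) :
    m = m' := by
  funext j
  have hprime : ∀ i : {x // x ∈ s}, (i : ℕ).Prime := fun i => hs i i.2
  have key : ∀ μ : {x // x ∈ s} → ℕ,
      (∏ i : {x // x ∈ s}, (i : ℕ) ^ μ i).factorization (j : ℕ) = μ j := by
    intro μ
    rw [Nat.factorization_prod (fun i _ => pow_ne_zero _ (hprime i).pos.ne')]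
    rw [Finset.sum_apply']
    rw [Finset.sum_eq_single j]
    · rw [Nat.Prime.factorization_pow (hprime j), Finsupp.single_eq_same]
    · intro i _ hij
      rw [Nat.Prime.factorization_pow (hprime i), Finsupp.single_eq_of_ne']
      exact fun hc => hij (Subtype.ext hc)
    · intro hj; exact absurd (Finset.mem_univ j) hj
  have := key m
  rw [h, key m'] at this
  exact this.symm

lemma sum_mul_log_prime_inj (s : Finset ℕ) (hs : ∀ p ∈ s, p.Prime)
    (m m' : {x // x ∈ s} → ℕ)
    (h : ∑ i : {x // x ∈ s}, (m i : ℝ) * Real.log (i : ℕ)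
       = ∑ i : {x // x ∈ s}, (m' i : ℝ) * Real.log (i : ℕ)) :
    m = m' := by
  have hprime : ∀ i : {x // x ∈ s}, (i : ℕ).Prime := fun i => hs i i.2
  have hlog : ∀ μ : {x // x ∈ s} → ℕ,
      ∑ i : {x // x ∈ s}, (μ i : ℝ) * Real.log (i : ℕ)
        = Real.log ((∏ i : {x // x ∈ s}, (i : ℕ) ^ μ i : ℕ) : ℝ) := by
    intro μ
    push_cast
    rw [Real.log_prod]
    · exact Finset.sum_congr rfl fun i _ => by rw [Real.log_pow]
    · intro i _
      exact pow_ne_zero _ (by exact_mod_cast (hprime i).pos.ne')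
  rw [hlog m, hlog m'] at h
  have hpos : ∀ μ : {x // x ∈ s} → ℕ, (0:ℝ) < ((∏ i : {x // x ∈ s}, (i : ℕ) ^ μ i : ℕ) : ℝ) := by
    intro μ
    have : (∏ i : {x // x ∈ s}, (i : ℕ) ^ μ i) ≠ 0 :=
      Finset.prod_ne_zero_iff.2 fun i _ => pow_ne_zero _ (hprime i).pos.ne'
    exact_mod_cast Nat.pos_of_ne_zero this
  have : ((∏ i : {x // x ∈ s}, (i : ℕ) ^ m i : ℕ) : ℝ)
       = ((∏ i : {x // x ∈ s}, (i : ℕ) ^ m' i : ℕ) : ℝ) := by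
    rw [← Real.exp_log (hpos m), ← Real.exp_log (hpos m'), h]
  exact prod_pow_prime_inj s hs m m' (by exact_mod_cast this)

lemma prod_one_add_exp_pow {ι : Type*} [Fintype ι] [DecidableEq ι] (n : ℕ) (φ : ι → ℝ) :
    (∏ i, (1 + Complex.exp ((φ i : ℂ) * Complex.I))) ^ n
    = ∑ m ∈ Fintype.piFinset (fun _ : ι => Finset.range (n+1)),
        (∏ i, (n.choose (m i) : ℂ)) *
          Complex.exp (((∑ i, (m i : ℝ) * φ i : ℝ) : ℂ) * Complex.I) := by
  have step1 : (∏ i, (1 + Complex.exp ((φ i : ℂ) * Complex.I))) ^ n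
      = ∏ i, ∑ j ∈ Finset.range (n+1),
          Complex.exp ((φ i : ℂ) * Complex.I) ^ j * (n.choose j : ℂ) := by
    rw [← Finset.prod_pow]
    refine Finset.prod_congr rfl fun i _ => ?_
    rw [add_comm, add_pow]
    exact Finset.sum_congr rfl fun j _ => by rw [one_pow, mul_one]
  rw [step1, Finset.prod_univ_sum]
  refine Finset.sum_congr rfl fun m _ => ?_
  rw [Finset.prod_mul_distrib, mul_comm]
  congr 1
  have : ∀ i : ι, Complex.exp ((φ i : ℂ) * Complex.I) ^ (m i)
      = Complex.exp ((m i : ℂ) * ((φ i : ℂ) * Complex.I)) := fun i =>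
    (Complex.exp_nat_mul _ _).symm
  simp_rw [this, ← Complex.exp_sum]
  congr 1
  push_cast
  rw [Finset.sum_mul]
  exact Finset.sum_congr rfl fun i _ => by ring

lemma cont_exp_lin (d : ℝ) : Continuous fun t : ℝ => Complex.exp (((t * d : ℝ) : ℂ) * Complex.I) := by
  fun_prop

lemma norm_integral_exp_le (d T : ℝ) (hd : d ≠ 0) :
    ‖∫ t in (0:ℝ)..T, Complex.exp (((t * d : ℝ) : ℂ) * Complex.I)‖ ≤ 2 / |d| := by
  have hc : ((d : ℂ) * Complex.I) ≠ 0 := by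
    simp [Complex.ext_iff, hd]
  rw [show (fun t : ℝ => Complex.exp (((t * d : ℝ) : ℂ) * Complex.I))
      = fun t : ℝ => Complex.exp (((d : ℂ) * Complex.I) * t) from
      funext fun t => by congr 1; push_cast; ring]
  rw [integral_exp_mul_complex hc]
  rw [norm_div]
  have h1 : ∀ x : ℝ, ‖Complex.exp (((d:ℂ) * Complex.I) * x)‖ = 1 := by
    intro x
    rw [show ((d:ℂ) * Complex.I) * x = ((x * d : ℝ):ℂ) * Complex.I by push_cast; ring]
    rw [Complex.norm_exp_ofReal_mul_I]
  have h2 : ‖((d:ℂ) * Complex.I)‖ = |d| := by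
    rw [norm_mul, Complex.norm_I, Complex.norm_real, Real.norm_eq_abs, mul_one]
  rw [h2]
  gcongr
  calc ‖Complex.exp (((d:ℂ)*Complex.I) * T) - Complex.exp (((d:ℂ)*Complex.I) * (0:ℝ))‖
      ≤ ‖Complex.exp (((d:ℂ)*Complex.I) * T)‖ + ‖Complex.exp (((d:ℂ)*Complex.I) * (0:ℝ))‖ :=
        norm_sub_le _ _
    _ = 2 := by rw [h1, h1]; norm_num

set_option maxHeartbeats 1000000 in
/-- For every `D`, `ε > 0`, `T₀ > 0` there is `T > T₀` such that `|p^{iT} - 1| ≤ ε`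
for all primes `p ≤ D` with `p ≡ 1 (mod 3)`, and `|p^{iT} + 1| ≤ ε` for all primes
`p ≤ D` with `p ≡ 2 (mod 3)`. Here `p^{iT} = exp(i T log p)`. -/
theorem simultaneous_approx_primes_chi (D : ℕ) (ε T₀ : ℝ) (hε : 0 < ε) (hT₀ : 0 < T₀) :
    ∃ T : ℝ, T₀ < T ∧
      (∀ p : ℕ, p.Prime → p ≤ D → p % 3 = 1 →
        ‖Complex.exp (Complex.I * T * Real.log p) - 1‖ ≤ ε) ∧
      (∀ p : ℕ, p.Prime → p ≤ D → p % 3 = 2 →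
        ‖Complex.exp (Complex.I * T * Real.log p) + 1‖ ≤ ε) := by
  classical
  by_contra hcon
  push_neg at hcon
  set s : Finset ℕ := (Finset.range (D+1)).filter (fun p => p.Prime ∧ ¬ p % 3 = 0) with hsdef
  have hsprime : ∀ p ∈ s, p.Prime := fun p hp => ((Finset.mem_filter.1 hp).2).1
  set ε' : ℝ := min ε 1 with hε'def
  have hε'pos : 0 < ε' := lt_min hε one_pos
  have hε'le : ε' ≤ 1 := min_le_right _ _
  have hε'ε : ε' ≤ ε := min_le_left _ _
  set θ : ℕ → ℝ := fun p => if p % 3 = 1 then 0 else Real.pi with hθdef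
  set z : ℕ → ℝ → ℂ :=
    fun p t => Complex.exp (((t * Real.log p - θ p : ℝ) : ℂ) * Complex.I) with hzdef
  -- relating z to the statement's exponentials
  have hz1 : ∀ (p : ℕ) (t : ℝ), p % 3 = 1 →
      z p t - 1 = Complex.exp (Complex.I * t * Real.log p) - 1 := by
    intro p t hp
    simp only [hzdef, hθdef, hp, if_pos rfl]
    congr 2
    push_cast
    ring
  have hz2 : ∀ (p : ℕ) (t : ℝ), p % 3 = 2 →
      z p t - 1 = -(Complex.exp (Complex.I * t * Real.log p) + 1) := by
    intro p t hp
    have hne : ¬ p % 3 = 1 := by omega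
    simp only [hzdef, hθdef, if_neg hne]
    have : ((t * Real.log p - Real.pi : ℝ) : ℂ) * Complex.I
        = Complex.I * t * Real.log p + (-(Real.pi * Complex.I)) := by push_cast; ring
    rw [this, Complex.exp_add, Complex.exp_neg, Complex.exp_pi_mul_I]
    ring
  -- key: for every t > T₀ there is a "bad" prime
  have key : ∀ t : ℝ, T₀ < t → ∃ p ∈ s, ε' ≤ ‖z p t - 1‖ := by
    intro t ht
    by_cases hP : ∀ p : ℕ, p.Prime → p ≤ D → p % 3 = 1 →
        ‖Complex.exp (Complex.I * t * Real.log p) - 1‖ ≤ ε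
    · obtain ⟨p, hp, hpD, hp3, hlt⟩ := hcon t ht hP
      refine ⟨p, ?_, ?_⟩
      · simp only [hsdef, Finset.mem_filter, Finset.mem_range]
        exact ⟨Nat.lt_succ_of_le hpD, hp, by omega⟩
      · rw [hz2 p t hp3, norm_neg]
        linarith
    · push_neg at hP
      obtain ⟨p, hp, hpD, hp3, hlt⟩ := hP
      refine ⟨p, ?_, ?_⟩
      · simp only [hsdef, Finset.mem_filter, Finset.mem_range]
        exact ⟨Nat.lt_succ_of_le hpD, hp, by omega⟩
      · rw [hz1 p t hp3]
        linarith
  -- basic norms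
  have hznorm : ∀ (p : ℕ) (t : ℝ), ‖z p t‖ = 1 := by
    intro p t
    simp only [hzdef]
    rw [Complex.norm_exp_ofReal_mul_I]
  have h1z : ∀ (p : ℕ) (t : ℝ), ‖1 + z p t‖ ≤ 2 := by
    intro p t
    calc ‖1 + z p t‖ ≤ ‖(1:ℂ)‖ + ‖z p t‖ := norm_add_le _ _
      _ = 2 := by rw [norm_one, hznorm]; norm_num
  set ρ : ℝ := Real.sqrt (1 - ε'^2/4) with hρdef
  have hρsub : 0 ≤ 1 - ε'^2/4 := by nlinarith
  have hρ0 : 0 ≤ ρ := Real.sqrt_nonneg _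
  have hρsq : ρ^2 = 1 - ε'^2/4 := Real.sq_sqrt hρsub
  have hρ1 : ρ < 1 := by nlinarith
  have hzρ : ∀ (p : ℕ) (t : ℝ), ε' ≤ ‖z p t - 1‖ → ‖1 + z p t‖ ≤ 2 * ρ := by
    intro p t hbad
    set w := z p t with hw
    have hw1 : w.re^2 + w.im^2 = 1 := by
      have h := hznorm p t
      have h2 : Complex.normSq w = 1 := by
        rw [← Complex.sq_norm, hw, h]; norm_num
      rw [Complex.normSq_apply] at h2
      nlinarith [h2]
    have e1 : ‖1 + w‖^2 = (1 + w.re)^2 + w.im^2 := by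
      rw [Complex.sq_norm, Complex.normSq_apply]
      simp [Complex.add_re, Complex.add_im]
      ring
    have e2 : ‖w - 1‖^2 = (w.re - 1)^2 + w.im^2 := by
      rw [Complex.sq_norm, Complex.normSq_apply]
      simp [Complex.sub_re, Complex.sub_im]
      ring
    have hb2 : ε'^2 ≤ ‖w - 1‖^2 := by
      have := norm_nonneg (w - 1)
      nlinarith
    have hsum : ‖1 + w‖^2 ≤ 4 - ε'^2 := by nlinarith
    have h2ρ : (2*ρ)^2 = 4 - ε'^2 := by nlinarith
    refine (pow_le_pow_iff_left₀ (norm_nonneg _) (by positivity) two_ne_zero).1 ?_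
    nlinarith
  set k : ℕ := s.card with hkdef
  have hcard : Fintype.card {x // x ∈ s} = k := Fintype.card_coe s
  set F : ℝ → ℂ := fun t => ∏ i : {x // x ∈ s}, (1 + z i t) with hFdef
  have hFnorm : ∀ t, ‖F t‖ = ∏ i : {x // x ∈ s}, ‖1 + z i t‖ := fun t => norm_prod _ _
  have hF2 : ∀ t, ‖F t‖ ≤ 2^k := by
    intro t
    rw [hFnorm]
    calc ∏ i : {x // x ∈ s}, ‖1 + z i t‖ ≤ ∏ _i : {x // x ∈ s}, (2:ℝ) :=
          Finset.prod_le_prod (fun i _ => norm_nonneg _) (fun i _ => h1z i t)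
      _ = 2^k := by rw [Finset.prod_const, Finset.card_univ, hcard]
  have hk1 : ∀ t : ℝ, T₀ < t → 1 ≤ k := by
    intro t ht
    obtain ⟨p, hps, _⟩ := key t ht
    have : s.Nonempty := ⟨p, hps⟩
    simpa [hkdef] using Finset.card_pos.2 this
  have hFρ : ∀ t : ℝ, T₀ < t → ‖F t‖ ≤ 2^k * ρ := by
    intro t ht
    obtain ⟨p, hps, hbad⟩ := key t ht
    have hk := hk1 t ht
    set i₀ : {x // x ∈ s} := ⟨p, hps⟩ with hi₀
    rw [hFnorm]
    rw [← Finset.mul_prod_erase Finset.univ _ (Finset.mem_univ i₀)]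
    have hrest : ∏ i ∈ Finset.univ.erase i₀, ‖1 + z i t‖ ≤ 2^(k-1) := by
      calc ∏ i ∈ Finset.univ.erase i₀, ‖1 + z i t‖
          ≤ ∏ _i ∈ Finset.univ.erase i₀, (2:ℝ) :=
            Finset.prod_le_prod (fun i _ => norm_nonneg _) (fun i _ => h1z i t)
        _ = 2^(k-1) := by
            rw [Finset.prod_const, Finset.card_erase_of_mem (Finset.mem_univ i₀),
              Finset.card_univ, hcard]
    calc ‖1 + z i₀ t‖ * ∏ i ∈ Finset.univ.erase i₀, ‖1 + z i t‖
        ≤ (2*ρ) * 2^(k-1) := by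
          exact mul_le_mul (hzρ p t hbad) hrest (Finset.prod_nonneg fun i _ => norm_nonneg _)
            (by positivity)
      _ = 2^k * ρ := by
          have : (2:ℝ)^k = 2 * 2^(k-1) := by
            rw [← pow_succ']
            congr 1
            omega
          rw [this]; ring
  -- choose M
  have htend : Filter.Tendsto (fun n : ℕ => (n:ℝ)^k * (ρ^2)^n) Filter.atTop (nhds 0) :=
    tendsto_pow_const_mul_const_pow_of_lt_one k (by positivity) (by nlinarith)
  have hev : ∀ᶠ n : ℕ in Filter.atTop, (n:ℝ)^k * (ρ^2)^n < 1/2^k :=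
    htend.eventually (gt_mem_nhds (by positivity))
  obtain ⟨M, hM, hM1⟩ := (hev.and (Filter.eventually_ge_atTop 1)).exists
  set n : ℕ := 2 * M with hndef
  set lam : ({x // x ∈ s} → ℕ) → ℝ :=
    fun m => ∑ i : {x // x ∈ s}, (m i : ℝ) * Real.log (i:ℕ) with hlamdef
  set Th : ({x // x ∈ s} → ℕ) → ℝ :=
    fun m => ∑ i : {x // x ∈ s}, (m i : ℝ) * θ (i:ℕ) with hThdef
  set P : Finset ({x // x ∈ s} → ℕ) :=
    Fintype.piFinset (fun _ => Finset.range (n+1)) with hPdef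
  set mstar : {x // x ∈ s} → ℕ := fun _ => M with hmstardef
  have hmstarP : mstar ∈ P := by
    simp only [hPdef, Fintype.mem_piFinset, hmstardef, Finset.mem_range]
    intro i; omega
  set A : ({x // x ∈ s} → ℕ) → ℂ := fun m =>
    (∏ i : {x // x ∈ s}, (n.choose (m i) : ℂ)) *
      Complex.exp (((-(Th m) : ℝ) : ℂ) * Complex.I) with hAdef
  set G : ℝ → ℂ := fun t =>
    F t ^ n * Complex.exp (((-(t * lam mstar) : ℝ) : ℂ) * Complex.I) with hGdef
  -- expansion of G
  have hFn : ∀ t : ℝ, F t ^ n = ∑ m ∈ P,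
      (∏ i : {x // x ∈ s}, (n.choose (m i) : ℂ)) *
        Complex.exp (((∑ i : {x // x ∈ s},
          (m i : ℝ) * (t * Real.log (i:ℕ) - θ (i:ℕ)) : ℝ) : ℂ) * Complex.I) := by
    intro t
    exact prod_one_add_exp_pow (ι := {x // x ∈ s}) n (fun i => t * Real.log (i:ℕ) - θ (i:ℕ))
  have hsumφ : ∀ (m : {x // x ∈ s} → ℕ) (t : ℝ),
      (∑ i : {x // x ∈ s}, (m i : ℝ) * (t * Real.log (i:ℕ) - θ (i:ℕ)))
        = t * lam m - Th m := by
    intro m t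
    simp only [hlamdef, hThdef, Finset.mul_sum]
    rw [← Finset.sum_sub_distrib]
    exact Finset.sum_congr rfl fun i _ => by ring
  have hG : ∀ t : ℝ, G t = ∑ m ∈ P,
      A m * Complex.exp (((t * (lam m - lam mstar) : ℝ) : ℂ) * Complex.I) := by
    intro t
    simp only [hGdef]
    rw [hFn t, Finset.sum_mul]
    refine Finset.sum_congr rfl fun m _ => ?_
    rw [hsumφ m t]
    simp only [hAdef]
    rw [mul_assoc, mul_assoc]
    congr 1
    rw [← Complex.exp_add, ← Complex.exp_add]
    congr 1
    push_cast
    ring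
  -- continuity
  have hzc : ∀ p : ℕ, Continuous (z p) := by
    intro p
    simp only [hzdef]
    fun_prop
  have hFc : Continuous F := by
    simp only [hFdef]
    apply continuous_finset_prod
    intro i _
    exact continuous_const.add (hzc (i : ℕ))
  have hGc : Continuous G := by
    simp only [hGdef]
    fun_prop
  have htermc : ∀ m : {x // x ∈ s} → ℕ,
      Continuous (fun t : ℝ =>
        A m * Complex.exp (((t * (lam m - lam mstar) : ℝ) : ℂ) * Complex.I)) := by
    intro m
    exact continuous_const.mul (cont_exp_lin _)
  -- integral computations
  have hIntEq : ∀ T : ℝ, (∫ t in (0:ℝ)..T, G t) = ∑ m ∈ P,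
      A m * ∫ t in (0:ℝ)..T, Complex.exp (((t * (lam m - lam mstar) : ℝ) : ℂ) * Complex.I) := by
    intro T
    rw [intervalIntegral.integral_congr (g := fun t => ∑ m ∈ P,
      A m * Complex.exp (((t * (lam m - lam mstar) : ℝ) : ℂ) * Complex.I))
      (fun t _ => hG t)]
    rw [intervalIntegral.integral_finset_sum
      (fun m _ => ((htermc m).intervalIntegrable _ _))]
    exact Finset.sum_congr rfl fun m _ => intervalIntegral.integral_const_mul _ _
  have hAnorm : ∀ m : {x // x ∈ s} → ℕ, ‖A m‖ = ∏ i : {x // x ∈ s}, (n.choose (m i) : ℝ) := by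
    intro m
    simp only [hAdef]
    rw [norm_mul, Complex.norm_exp_ofReal_mul_I, mul_one]
    rw [show (∏ i : {x // x ∈ s}, (n.choose (m i) : ℂ))
        = ((∏ i : {x // x ∈ s}, (n.choose (m i) : ℝ) : ℝ) : ℂ) by push_cast; rfl]
    rw [Complex.norm_real, Real.norm_eq_abs, _root_.abs_of_nonneg]
    exact Finset.prod_nonneg fun i _ => by positivity
  set Cc : ℝ := (n.choose M : ℝ) with hCcdef
  have hAstar : ‖A mstar‖ = Cc^k := by
    rw [hAnorm]
    simp only [hmstardef]
    rw [Finset.prod_const, Finset.card_univ, hcard]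
  have hdne : ∀ m ∈ P.erase mstar, lam m - lam mstar ≠ 0 := by
    intro m hm
    have hmne : m ≠ mstar := (Finset.mem_erase.1 hm).1
    intro hc
    exact hmne (sum_mul_log_prime_inj s hsprime m mstar (by
      simp only [hlamdef] at hc ⊢
      linarith [sub_eq_zero.1 hc]))
  set B : ℝ := ∑ m ∈ P.erase mstar,
    (∏ i : {x // x ∈ s}, (n.choose (m i) : ℝ)) * (2 / |lam m - lam mstar|) with hBdef
  have hB0 : 0 ≤ B := by
    refine Finset.sum_nonneg fun m _ => ?_
    have : (0:ℝ) ≤ ∏ i : {x // x ∈ s}, (n.choose (m i) : ℝ) :=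
      Finset.prod_nonneg fun i _ => by positivity
    positivity
  -- lower bound on the integral
  have hlow : ∀ T : ℝ, 0 ≤ T → Cc^k * T - B ≤ ‖∫ t in (0:ℝ)..T, G t‖ := by
    intro T hT
    rw [hIntEq T]
    rw [← Finset.add_sum_erase P _ hmstarP]
    have hstar : A mstar * (∫ t in (0:ℝ)..T,
        Complex.exp (((t * (lam mstar - lam mstar) : ℝ) : ℂ) * Complex.I)) = A mstar * T := by
      congr 1
      simp only [sub_self, mul_zero, Complex.ofReal_zero, zero_mul, Complex.exp_zero]
      simp
    rw [hstar]
    have hnorm1 : ‖A mstar * (T:ℂ)‖ = Cc^k * T := by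
      rw [norm_mul, hAstar, Complex.norm_real, Real.norm_eq_abs, _root_.abs_of_nonneg hT]
    have hnorm2 : ‖∑ m ∈ P.erase mstar, A m * ∫ t in (0:ℝ)..T,
        Complex.exp (((t * (lam m - lam mstar) : ℝ) : ℂ) * Complex.I)‖ ≤ B := by
      refine (norm_sum_le _ _).trans ?_
      rw [hBdef]
      refine Finset.sum_le_sum fun m hm => ?_
      rw [norm_mul, hAnorm]
      refine mul_le_mul_of_nonneg_left ?_ (Finset.prod_nonneg fun i _ => by positivity)
      exact norm_integral_exp_le _ T (hdne m hm)
    calc Cc^k * T - B ≤ ‖A mstar * (T:ℂ)‖ - ‖∑ m ∈ P.erase mstar, A m * ∫ t in (0:ℝ)..T,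
          Complex.exp (((t * (lam m - lam mstar) : ℝ) : ℂ) * Complex.I)‖ := by
          rw [hnorm1]; linarith
      _ ≤ ‖A mstar * (T:ℂ) + ∑ m ∈ P.erase mstar, A m * ∫ t in (0:ℝ)..T,
          Complex.exp (((t * (lam m - lam mstar) : ℝ) : ℂ) * Complex.I)‖ := by
          have := norm_sub_le (A mstar * (T:ℂ) + ∑ m ∈ P.erase mstar, A m * ∫ t in (0:ℝ)..T,
            Complex.exp (((t * (lam m - lam mstar) : ℝ) : ℂ) * Complex.I))
            (∑ m ∈ P.erase mstar, A m * ∫ t in (0:ℝ)..T,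
            Complex.exp (((t * (lam m - lam mstar) : ℝ) : ℂ) * Complex.I))
          simp only [add_sub_cancel_right] at this
          linarith
  -- norm of G
  have hGnorm : ∀ t : ℝ, ‖G t‖ = ‖F t‖^n := by
    intro t
    simp only [hGdef]
    rw [norm_mul, norm_pow,
      Complex.norm_exp_ofReal_mul_I, mul_one]
  -- upper bound on the integral
  have hup : ∀ T : ℝ, T₀ ≤ T →
      ‖∫ t in (0:ℝ)..T, G t‖ ≤ T₀ * ((2:ℝ)^k)^n + (T - T₀) * ((2:ℝ)^k * ρ)^n := by
    intro T hT
    rw [← intervalIntegral.integral_add_adjacent_intervals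
      (hGc.intervalIntegrable 0 T₀) (hGc.intervalIntegrable T₀ T)]
    refine (norm_add_le _ _).trans ?_
    have h1 : ‖∫ t in (0:ℝ)..T₀, G t‖ ≤ ((2:ℝ)^k)^n * |T₀ - 0| := by
      refine intervalIntegral.norm_integral_le_of_norm_le_const fun x _ => ?_
      rw [hGnorm]
      exact pow_le_pow_left₀ (norm_nonneg _) (hF2 x) n
    have h2 : ‖∫ t in T₀..T, G t‖ ≤ ((2:ℝ)^k * ρ)^n * |T - T₀| := by
      refine intervalIntegral.norm_integral_le_of_norm_le_const fun x hx => ?_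
      rw [Set.uIoc_of_le hT] at hx
      rw [hGnorm]
      exact pow_le_pow_left₀ (norm_nonneg _) (hFρ x hx.1) n
    rw [_root_.abs_of_nonneg (by linarith : (0:ℝ) ≤ T₀ - 0)] at h1
    rw [_root_.abs_of_nonneg (by linarith : (0:ℝ) ≤ T - T₀)] at h2
    calc ‖∫ t in (0:ℝ)..T₀, G t‖ + ‖∫ t in T₀..T, G t‖
        ≤ ((2:ℝ)^k)^n * (T₀ - 0) + ((2:ℝ)^k * ρ)^n * (T - T₀) := add_le_add h1 h2
      _ = T₀ * ((2:ℝ)^k)^n + (T - T₀) * ((2:ℝ)^k * ρ)^n := by ring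
  -- main inequality by letting T → ∞
  have hmain : Cc^k ≤ ((2:ℝ)^k * ρ)^n := by
    by_contra hc
    push_neg at hc
    set δ : ℝ := Cc^k - ((2:ℝ)^k * ρ)^n with hδdef
    have hδpos : 0 < δ := by simp only [hδdef]; linarith
    set K : ℝ := B + T₀ * ((2:ℝ)^k)^n with hKdef
    have hK0 : 0 ≤ K := by
      have : (0:ℝ) ≤ T₀ * ((2:ℝ)^k)^n := by positivity
      simp only [hKdef]; linarith
    set T : ℝ := max (T₀ + 1) (K/δ + 1) with hTdef
    have hTT₀ : T₀ < T := lt_of_lt_of_le (by linarith) (le_max_left _ _)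
    have hTK : K/δ < T := lt_of_lt_of_le (by linarith) (le_max_right _ _)
    have hTpos : 0 < T := lt_trans hT₀ hTT₀
    have hlow' := hlow T (le_of_lt hTpos)
    have hup' := hup T (le_of_lt hTT₀)
    have hδT : δ * T ≤ K := by
      have h1 : Cc^k * T - B ≤ T₀ * ((2:ℝ)^k)^n + (T - T₀) * ((2:ℝ)^k * ρ)^n :=
        le_trans hlow' hup'
      have h2 : (T - T₀) * ((2:ℝ)^k * ρ)^n ≤ T * ((2:ℝ)^k * ρ)^n := by
        have : (0:ℝ) ≤ ((2:ℝ)^k * ρ)^n := by positivity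
        nlinarith
      simp only [hδdef, hKdef]
      nlinarith
    have : K < δ * T := by
      rw [div_lt_iff₀ hδpos] at hTK
      linarith [hTK]
    linarith
  -- final contradiction via central binomial bound
  have hMpos : 0 < M := hM1
  have hcb : 4^M ≤ 2 * M * Nat.centralBinom M :=
    Nat.four_pow_le_two_mul_self_mul_centralBinom M hMpos
  have hcbCc : (Nat.centralBinom M : ℝ) = Cc := by
    simp only [hCcdef, hndef, Nat.centralBinom]
  have h4M : (4:ℝ)^M ≤ (2*M : ℝ) * Cc := by
    rw [← hcbCc]
    exact_mod_cast hcb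
  have hCc1 : (1:ℝ) ≤ Cc := by
    simp only [hCcdef]
    exact_mod_cast Nat.succ_le_of_lt (Nat.choose_pos (by omega : M ≤ n))
  have hCck : (0:ℝ) < Cc^k := by positivity
  have hsmall : ((2*M:ℝ))^k * ρ^n < 1 := by
    have hρn : ρ^n = (ρ^2)^M := by rw [hndef, pow_mul]
    have : ((2*M:ℝ))^k = 2^k * (M:ℝ)^k := by rw [mul_pow]
    rw [hρn, this]
    calc 2^k * (M:ℝ)^k * (ρ^2)^M < 2^k * (1/2^k) := by
          have h2k : (0:ℝ) < 2^k := by positivity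
          rw [mul_assoc]
          exact (mul_lt_mul_iff_right₀ h2k).2 hM
      _ = 1 := by field_simp
  have hexp : ((2:ℝ)^k * ρ)^n = ((4:ℝ)^M)^k * ρ^n := by
    rw [mul_pow]
    congr 1
    rw [show (4:ℝ) = 2^2 by norm_num, hndef, ← pow_mul, ← pow_mul, ← pow_mul]
    congr 1
    ring
  have hfinal : ((2:ℝ)^k * ρ)^n < Cc^k := by
    rw [hexp]
    have h1 : ((4:ℝ)^M)^k ≤ ((2*M:ℝ) * Cc)^k := pow_le_pow_left₀ (by positivity) h4M k
    have h2 : ((2*M:ℝ) * Cc)^k = ((2*M:ℝ))^k * Cc^k := mul_pow _ _ _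
    have hρn0 : (0:ℝ) ≤ ρ^n := by positivity
    calc ((4:ℝ)^M)^k * ρ^n ≤ ((2*M:ℝ))^k * Cc^k * ρ^n := by nlinarith
      _ = (((2*M:ℝ))^k * ρ^n) * Cc^k := by ring
      _ < 1 * Cc^k := by nlinarith [hsmall, hCck]
      _ = Cc^k := one_mul _
  linarith [hmain, hfinal]
end

section
/- Let T₁ > 2 be real, N ≥ 2, m a positive integer and 0 ≤ a₁ < m. Then the Lebesgue measure of the set {x ∈ [0,1] : (Nx)^{iT₁} ∈ e([a₁/m, (a₁+1)/m))} equals 1/m + O(1/T₁), with absolute implied constant. -/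
open Real MeasureTheory

set_option maxHeartbeats 2000000 in
/-- For `T₁ > 2`, `N ≥ 2`, `0 ≤ a₁ < m`, the Lebesgue measure of
`{x ∈ [0,1] : (Nx)^{iT₁} ∈ e([a₁/m,(a₁+1)/m))}` equals `1/m + O(1/T₁)` with an
absolute implied constant; membership means the fractional part of
`T₁ log(Nx) / (2π)` lies in `[a₁/m, (a₁+1)/m)`. -/
theorem measure_equidistribution_one :
    ∃ C : ℝ, 0 < C ∧ ∀ (T₁ : ℝ) (N m a₁ : ℕ),
      2 < T₁ → 2 ≤ N → 0 < m → a₁ < m →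
      |(volume {x : ℝ | x ∈ Set.Icc (0 : ℝ) 1 ∧
          Int.fract (T₁ * Real.log (N * x) / (2 * π)) ∈
            Set.Ico ((a₁ : ℝ) / m) (((a₁ : ℝ) + 1) / m)}).toReal - 1 / m|
        ≤ C * (1 / T₁) := by
  have hπ := Real.pi_pos
  refine ⟨2 * π * Real.exp π, by positivity, ?_⟩
  intro T₁ N m a₁ hT hN hm ha
  have hT0 : (0:ℝ) < T₁ := by linarith
  set c : ℝ := 2 * π / T₁ with hc_def
  have hc0 : 0 < c := by positivity
  have hcπ : c ≤ π := by
    rw [hc_def, div_le_iff₀ hT0]; nlinarith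
  have hN2 : (2:ℝ) ≤ (N:ℝ) := by exact_mod_cast hN
  have hN0 : (0:ℝ) < (N:ℝ) := by linarith
  have hm0 : (0:ℝ) < (m:ℝ) := by exact_mod_cast hm
  have hm1 : (1:ℝ) ≤ (m:ℝ) := by exact_mod_cast hm
  set α : ℝ := (a₁:ℝ) / m with hα_def
  set β : ℝ := ((a₁:ℝ) + 1) / m with hβ_def
  have hα0 : 0 ≤ α := by positivity
  have hβ1 : β ≤ 1 := by
    rw [hβ_def, div_le_one hm0]
    have : (a₁:ℝ) + 1 ≤ m := by exact_mod_cast Nat.succ_le_of_lt ha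
    linarith
  have hβα : β = α + 1 / m := by rw [hα_def, hβ_def, add_div]
  have hαβ : α ≤ β := by
    rw [hβα]; have : 0 ≤ 1/(m:ℝ) := by positivity
    linarith
  -- the intervals
  set A : ℤ → ℝ := fun k => Real.exp (c * ((k:ℝ) + α)) / N with hA_def
  set B : ℤ → ℝ := fun k => Real.exp (c * ((k:ℝ) + β)) / N with hB_def
  have hA_pos : ∀ k, 0 < A k := fun k => by positivity
  have hAB : ∀ k, A k ≤ B k := by
    intro k
    apply (div_le_div_iff_of_pos_right hN0).2
    exact Real.exp_le_exp.2 (by nlinarith)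
  have hBA : ∀ k : ℤ, B k ≤ A (k + 1) := by
    intro k
    apply (div_le_div_iff_of_pos_right hN0).2
    · apply Real.exp_le_exp.2
      have h1m : 1/(m:ℝ) ≤ 1 := by
        rw [div_le_one hm0]; exact hm1
      have : β ≤ 1 + α := by rw [hβα]; linarith
      push_cast; nlinarith
  have hAmono : ∀ k l : ℤ, k ≤ l → A k ≤ A l := by
    intro k l hkl
    apply (div_le_div_iff_of_pos_right hN0).2
    apply Real.exp_le_exp.2
    have : (k:ℝ) ≤ (l:ℝ) := by exact_mod_cast hkl
    nlinarith
  set k₀ : ℤ := ⌊Real.log N / c - α⌋ with hk₀_def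
  have hk₀A : A k₀ ≤ 1 := by
    rw [hA_def]
    rw [div_le_one hN0]
    have h1 : (k₀:ℝ) ≤ Real.log N / c - α := Int.floor_le _
    have h2 : c * ((k₀:ℝ) + α) ≤ Real.log N := by
      rw [mul_comm]
      rw [← le_div_iff₀ hc0]; linarith
    calc Real.exp (c * ((k₀:ℝ) + α)) ≤ Real.exp (Real.log N) := Real.exp_le_exp.2 h2
      _ = N := Real.exp_log hN0
  have hk₀A' : 1 < A (k₀ + 1) := by
    rw [hA_def]
    rw [lt_div_iff₀ hN0, one_mul]
    have h1 : Real.log N / c - α < (k₀:ℝ) + 1 := Int.lt_floor_add_one _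
    have h2 : Real.log N < c * (((k₀:ℤ):ℝ) + 1 + α) := by
      rw [mul_comm, ← div_lt_iff₀ hc0]; linarith
    calc (N:ℝ) = Real.exp (Real.log N) := (Real.exp_log hN0).symm
      _ < Real.exp (c * (((k₀ + 1 : ℤ):ℝ) + α)) := by
          apply Real.exp_lt_exp.2; push_cast; push_cast at h2; linarith
  -- the union pieces
  set U : ℤ → Set ℝ := fun k => Set.Ico (A k) (min (B k) 1) with hU_def
  set S : Set ℝ := {x : ℝ | x ∈ Set.Icc (0 : ℝ) 1 ∧
      Int.fract (T₁ * Real.log (N * x) / (2 * π)) ∈ Set.Ico α β} with hS_def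
  have hcg : ∀ x : ℝ, c * (T₁ * Real.log ((N:ℝ) * x) / (2 * π)) = Real.log ((N:ℝ) * x) := by
    intro x
    rw [hc_def]
    field_simp
  have hiff : ∀ x : ℝ, 0 < x → x < 1 → (x ∈ S ↔ x ∈ ⋃ k, U k) := by
    intro x hx0 hx1
    have hNx : 0 < (N:ℝ) * x := by positivity
    set g : ℝ := T₁ * Real.log ((N:ℝ) * x) / (2 * π) with hg_def
    have hcg' : c * g = Real.log ((N:ℝ) * x) := hcg x
    constructor
    · rintro ⟨-, hfr⟩
      set k : ℤ := ⌊g⌋ with hk_def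
      have h1 : (k:ℝ) + α ≤ g := by
        have := hfr.1
        rw [Int.fract] at this
        linarith
      have h2 : g < (k:ℝ) + β := by
        have := hfr.2
        rw [Int.fract] at this
        linarith
      refine Set.mem_iUnion.2 ⟨k, ?_, ?_⟩
      · rw [hA_def]
        rw [div_le_iff₀ hN0]
        have h3 : Real.exp (c * ((k:ℝ) + α)) ≤ Real.exp (c * g) :=
          Real.exp_le_exp.2 (mul_le_mul_of_nonneg_left h1 hc0.le)
        rw [hcg', Real.exp_log hNx] at h3
        linarith
      · refine lt_min ?_ hx1
        rw [hB_def]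
        rw [lt_div_iff₀ hN0]
        have h3 : Real.exp (c * g) < Real.exp (c * ((k:ℝ) + β)) :=
          Real.exp_lt_exp.2 ((mul_lt_mul_iff_right₀ hc0).2 h2)
        rw [hcg', Real.exp_log hNx] at h3
        linarith
    · intro hx
      obtain ⟨k, hk⟩ := Set.mem_iUnion.1 hx
      obtain ⟨hk1, hk2⟩ := hk
      have hk2' : x < B k := lt_of_lt_of_le hk2 (min_le_left _ _)
      have e1 : c * ((k:ℝ) + α) ≤ Real.log ((N:ℝ) * x) := by
        rw [Real.le_log_iff_exp_le hNx]
        rw [hA_def] at hk1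
        rw [div_le_iff₀ hN0] at hk1
        linarith [hk1]
      have e2 : Real.log ((N:ℝ) * x) < c * ((k:ℝ) + β) := by
        rw [Real.log_lt_iff_lt_exp hNx]
        rw [hB_def] at hk2'
        rw [lt_div_iff₀ hN0] at hk2'
        linarith [hk2']
      have h1 : (k:ℝ) + α ≤ g := by
        rw [← hcg'] at e1
        exact le_of_mul_le_mul_left e1 hc0
      have h2 : g < (k:ℝ) + β := by
        rw [← hcg'] at e2
        exact lt_of_mul_lt_mul_left e2 hc0.le
      have hfl : ⌊g⌋ = k := by
        rw [Int.floor_eq_iff]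
        constructor
        · linarith
        · linarith
      constructor
      · exact ⟨le_of_lt hx0, le_of_lt hx1⟩
      · constructor
        · rw [Int.fract, hfl]; linarith
        · rw [Int.fract, hfl]; linarith
  -- measure of S equals measure of the union
  have hU_sub : (⋃ k, U k) ⊆ Set.Ioo (0:ℝ) 1 := by
    intro x hx
    obtain ⟨k, hk1, hk2⟩ := Set.mem_iUnion.1 hx
    exact ⟨lt_of_lt_of_le (hA_pos k) hk1, lt_of_lt_of_le hk2 (min_le_right _ _)⟩
  have hvol_eq : volume S = volume (⋃ k, U k) := by
    apply measure_congr
    rw [Filter.eventuallyEq_set, ae_iff]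
    apply measure_mono_null (t := ({0, 1} : Set ℝ))
    · intro x hx
      simp only [Set.mem_setOf_eq] at hx
      by_contra hx01
      simp only [Set.mem_insert_iff, Set.mem_singleton_iff, not_or] at hx01
      obtain ⟨h0, h1⟩ := hx01
      rcases lt_trichotomy x 0 with h | h | h
      · apply hx
        constructor
        · intro hxS; exact absurd hxS.1.1 (not_le.2 h)
        · intro hxU; exact absurd (hU_sub hxU).1 (not_lt.2 (le_of_lt h))
      · exact h0 h
      · rcases lt_trichotomy x 1 with h' | h' | h'
        · exact hx (hiff x h h')
        · exact h1 h'
        · apply hx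
          constructor
          · intro hxS; exact absurd hxS.1.2 (not_le.2 h')
          · intro hxU; exact absurd (hU_sub hxU).2 (not_lt.2 (le_of_lt h'))
    · exact (Set.toFinite _).measure_zero volume
  have hvol_union : volume (⋃ k, U k) = ∑' k : ℤ, volume (U k) := by
    apply measure_iUnion
    · intro k l hkl
      have key : ∀ k l : ℤ, k < l → Disjoint (U k) (U l) := by
        intro k l hkl'
        apply Set.disjoint_of_subset (Set.Subset.refl _) (Set.Ico_subset_Ico_left (le_refl _))
        rw [hU_def]
        simp only
        apply Set.Ico_disjoint_Ico.2
        have : B k ≤ A l := le_trans (hBA k) (hAmono _ _ (by omega))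
        calc min (min (B k) 1) (min (B l) 1) ≤ min (B k) 1 := min_le_left _ _
          _ ≤ B k := min_le_left _ _
          _ ≤ A l := this
          _ ≤ max (A k) (A l) := le_max_right _ _
      rcases lt_or_gt_of_ne hkl with h | h
      · exact key k l h
      · exact (key l k h).symm
    · intro k; exact measurableSet_Ico
  have hvol_k : ∀ k, volume (U k) = ENNReal.ofReal (min (B k) 1 - A k) := by
    intro k; rw [hU_def]; exact Real.volume_Ico
  -- vanishing for k > k₀
  have hF_zero : ∀ k : ℤ, k₀ < k → volume (U k) = 0 := by
    intro k hk
    rw [hvol_k]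
    apply ENNReal.ofReal_eq_zero.2
    have : 1 < A k := lt_of_lt_of_le hk₀A' (hAmono _ _ (by omega))
    have : min (B k) 1 ≤ 1 := min_le_right _ _
    linarith [lt_of_lt_of_le hk₀A' (hAmono (k₀+1) k (by omega))]
  -- reindex over ℕ
  have hreindex : ∑' k : ℤ, volume (U k) = ∑' n : ℕ, volume (U (k₀ - n)) := by
    refine (Function.Injective.tsum_eq (f := fun k => volume (U k)) (g := fun n : ℕ => k₀ - n) ?_ ?_).symm
    · intro n n' hnn'
      simp only [sub_right_inj, Nat.cast_inj] at hnn'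
      exact hnn'
    · intro k hk
      rw [Function.mem_support] at hk
      have hkle : k ≤ k₀ := by
        by_contra hgt
        push_neg at hgt
        exact hk (hF_zero k hgt)
      refine ⟨(k₀ - k).toNat, ?_⟩
      show k₀ - ((k₀ - k).toNat : ℤ) = k
      omega
  have harg : ∀ n : ℕ, k₀ - ((n : ℤ) + 1) = k₀ - 1 - (n : ℤ) := by intro n; ring
  have hsplit : ∑' n : ℕ, volume (U (k₀ - n)) =
      volume (U k₀) + ∑' n : ℕ, volume (U (k₀ - 1 - n)) := by
    rw [tsum_eq_zero_add' ENNReal.summable]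
    congr 1
    · norm_num
    · apply tsum_congr
      intro n
      congr 1
      push_cast
      ring
  -- key exponential quantities
  set u : ℝ := Real.exp (-c) with hu_def
  set v : ℝ := Real.exp (c * (1 / m)) with hv_def
  set w : ℝ := Real.exp c with hw_def
  have hu0 : 0 < u := Real.exp_pos _
  have hu1 : u < 1 := Real.exp_lt_one_iff.2 (by linarith)
  have h1u : 0 < 1 - u := by linarith
  have huw : u * w = 1 := by rw [hu_def, hw_def, ← Real.exp_add]; simp
  have hw1 : 1 < w := by
    have := Real.add_one_le_exp c; rw [← hw_def] at this; linarith
  have hv1 : c * (1 / m) + 1 ≤ v := Real.add_one_le_exp _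
  have hv1' : 1 ≤ v := by
    have : 0 ≤ c * (1 / (m:ℝ)) := by positivity
    linarith
  have hvw : v ≤ w := by
    rw [hv_def, hw_def]
    apply Real.exp_le_exp.2
    have h1m : 1/(m:ℝ) ≤ 1 := by rw [div_le_one hm0]; exact hm1
    calc c * (1/(m:ℝ)) ≤ c * 1 := mul_le_mul_of_nonneg_left h1m hc0.le
      _ = c := mul_one c
  -- B k = A k * v, A (k-1) = A k * u, A (k+1) = A k * w
  have hBv : ∀ k : ℤ, B k = A k * v := by
    intro k
    have h : c * ((k:ℝ) + β) = c * ((k:ℝ) + α) + c * (1 / m) := by rw [hβα]; ring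
    rw [hA_def, hB_def, hv_def]
    simp only
    rw [h, Real.exp_add]
    ring
  have hAu : ∀ k : ℤ, A (k - 1) = A k * u := by
    intro k
    have h : c * (((k - 1 : ℤ) : ℝ) + α) = c * ((k:ℝ) + α) + (-c) := by
      push_cast; ring
    rw [hA_def, hu_def]
    simp only
    rw [h, Real.exp_add]
    ring
  have hAw : ∀ k : ℤ, A (k + 1) = A k * w := by
    intro k
    have h : c * (((k + 1 : ℤ) : ℝ) + α) = c * ((k:ℝ) + α) + c := by
      push_cast; ring
    rw [hA_def, hw_def]
    simp only
    rw [h, Real.exp_add]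
    ring
  have hAn : ∀ n : ℕ, A (k₀ - 1 - n) = A (k₀ - 1) * u ^ n := by
    intro n
    have h : c * (((k₀ - 1 - (n:ℤ) : ℤ) : ℝ) + α) =
        c * (((k₀ - 1 : ℤ) : ℝ) + α) + (n:ℕ) * (-c) := by
      push_cast; ring
    rw [hA_def, hu_def]
    simp only
    rw [h, Real.exp_add, Real.exp_nat_mul]
    ring
  have hBn : ∀ n : ℕ, B (k₀ - 1 - n) = B (k₀ - 1) * u ^ n := by
    intro n
    have h : c * (((k₀ - 1 - (n:ℤ) : ℤ) : ℝ) + β) =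
        c * (((k₀ - 1 : ℤ) : ℝ) + β) + (n:ℕ) * (-c) := by
      push_cast; ring
    rw [hB_def, hu_def]
    simp only
    rw [h, Real.exp_add, Real.exp_nat_mul]
    ring
  have hB_le_one : ∀ n : ℕ, B (k₀ - 1 - n) ≤ 1 := by
    intro n
    calc B (k₀ - 1 - n) ≤ A (k₀ - 1 - n + 1) := hBA _
      _ ≤ A k₀ := hAmono _ _ (by omega)
      _ ≤ 1 := hk₀A
  set M : ℝ := B (k₀ - 1) - A (k₀ - 1) with hM_def
  have hM0 : 0 ≤ M := sub_nonneg.2 (hAB _)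
  have hterm : ∀ n : ℕ, volume (U (k₀ - 1 - n)) =
      ENNReal.ofReal M * ENNReal.ofReal u ^ n := by
    intro n
    rw [hvol_k, min_eq_left (hB_le_one n), hAn, hBn, ← sub_mul,
      ENNReal.ofReal_mul hM0, ENNReal.ofReal_pow hu0.le]
  have hsum2 : ∑' n : ℕ, volume (U (k₀ - 1 - n)) =
      ENNReal.ofReal M * ENNReal.ofReal ((1 - u)⁻¹) := by
    have hone : (1 : ENNReal) - ENNReal.ofReal u = ENNReal.ofReal (1 - u) := by
      rw [ENNReal.ofReal_sub 1 hu0.le, ENNReal.ofReal_one]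
    simp_rw [hterm]
    rw [ENNReal.tsum_mul_left, ENNReal.tsum_geometric, hone,
      ← ENNReal.ofReal_inv_of_pos h1u]
  set clip : ℝ := min (B k₀) 1 - A k₀ with hclip_def
  have hclip0 : 0 ≤ clip := sub_nonneg.2 (le_min (hAB k₀) hk₀A)
  have hST : volume S = ENNReal.ofReal (clip + M * (1 - u)⁻¹) := by
    rw [hvol_eq, hvol_union, hreindex, hsplit, hvol_k k₀, hsum2,
      ← ENNReal.ofReal_mul hM0, ← hclip_def,
      ← ENNReal.ofReal_add hclip0 (mul_nonneg hM0 (inv_nonneg.2 h1u.le))]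
  have htoReal : (volume S).toReal = clip + M * (1 - u)⁻¹ := by
    rw [hST, ENNReal.toReal_ofReal
      (add_nonneg hclip0 (mul_nonneg hM0 (inv_nonneg.2 h1u.le)))]
  -- rewrite the geometric factor
  set D : ℝ := A k₀ with hD_def
  have hD0 : 0 < D := hA_pos k₀
  have hD1 : D ≤ 1 := hk₀A
  have hDu : u < D := by
    have hw0 : (0:ℝ) < w := by linarith
    have h1 : 1 < D * w := by rw [hD_def, ← hAw]; exact hk₀A'
    have h2 : u = 1 / w := eq_one_div_of_mul_eq_one_left huw
    rw [h2, div_lt_iff₀ hw0]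
    linarith
  have hwm1 : (0:ℝ) < w - 1 := by linarith
  have hM_eq : M = D * u * (v - 1) := by
    rw [hM_def, hBv, show k₀ - 1 = k₀ - 1 from rfl]
    have : A (k₀ - 1) = D * u := hAu k₀
    rw [this]; ring
  have hQ_eq : M * (1 - u)⁻¹ = D * (v - 1) / (w - 1) := by
    have huw1 : u * (w - 1) = 1 - u := by rw [mul_sub, huw, mul_one]
    rw [hM_eq, ← div_eq_mul_inv, div_eq_div_iff h1u.ne' hwm1.ne']
    linear_combination (D * (v - 1)) * huw1
  -- Bernoulli: w = v ^ m and 1 + m (v-1) ≤ w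
  have hwv : w = v ^ m := by
    rw [hw_def, hv_def, ← Real.exp_nat_mul]
    congr 1
    field_simp
  have hbern : 1 + (m:ℝ) * (v - 1) ≤ w := by
    rw [hwv]
    calc 1 + (m:ℝ) * (v - 1) ≤ (1 + (v - 1)) ^ m := one_add_mul_le_pow (by linarith) m
      _ = v ^ m := by ring_nf
  have hwc : w - 1 ≤ c * w := by
    have h := Real.add_one_le_exp (-c)
    rw [← hu_def] at h
    have hw0 : (0:ℝ) ≤ w := by linarith
    have h2 := mul_le_mul_of_nonneg_right h hw0
    have h3 : u * w = 1 := huw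
    linarith [h2, h3]
  have hu2 : 1 - 2 * c ≤ u * u := by
    have h : u * u = Real.exp (-(2 * c)) := by rw [hu_def, ← Real.exp_add]; ring_nf
    have := Real.add_one_le_exp (-(2 * c))
    rw [← h] at this
    linarith
  -- upper bound for the geometric part
  have hQ1 : D * (v - 1) / (w - 1) ≤ 1 / m := by
    rw [div_le_div_iff₀ hwm1 hm0]
    have e1 : D * (v - 1) ≤ 1 * (v - 1) :=
      mul_le_mul_of_nonneg_right hD1 (sub_nonneg.2 hv1')
    have e2 : D * (v - 1) * m ≤ 1 * (v - 1) * m :=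
      mul_le_mul_of_nonneg_right e1 hm0.le
    have e3 : 1 * (v - 1) * (m:ℝ) = (m:ℝ) * (v - 1) := by ring
    linarith [hbern]
  -- lower bound for the geometric part
  have hQ2 : 1 / m - 2 * c ≤ D * (v - 1) / (w - 1) := by
    have hstep1 : u * (c / m) ≤ D * (v - 1) := by
      have h1 : c / m ≤ v - 1 := by
        have : c * (1 / m) = c / m := by ring
        rw [this] at hv1; linarith
      have h2 : 0 ≤ c / (m:ℝ) := by positivity
      exact mul_le_mul hDu.le h1 h2 hD0.le
    have hcw : 0 < c * w := by nlinarith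
    have hstep2 : u * (c / m) / (c * w) ≤ u * (c / m) / (w - 1) :=
      div_le_div_of_nonneg_left (by positivity) hwm1 hwc
    have hstep3 : u * (c / m) / (c * w) = u * u / m := by
      rw [div_eq_div_iff hcw.ne' hm0.ne']
      have htm : (c/(m:ℝ))*m = c := div_mul_cancel₀ _ (ne_of_gt hm0)
      linear_combination u * htm - u * c * huw
    have hstep4 : 1 / m - 2 * c ≤ u * u / m := by
      have h1 : (1 - 2*c)/(m:ℝ) ≤ u * u / m := (div_le_div_iff_of_pos_right hm0).2 hu2
      have h2 : 2*c/(m:ℝ) ≤ 2*c := div_le_self (by positivity) hm1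
      have h3 : (1 - 2*c)/(m:ℝ) = 1/m - 2*c/m := by ring
      linarith
    calc (1:ℝ) / m - 2 * c ≤ u * u / m := hstep4
      _ = u * (c / m) / (c * w) := hstep3.symm
      _ ≤ u * (c / m) / (w - 1) := hstep2
      _ ≤ D * (v - 1) / (w - 1) := (div_le_div_iff_of_pos_right hwm1).2 hstep1
  -- bounds on the clipped part
  have hclip_le : clip ≤ Real.exp π * c := by
    have h1 : clip ≤ B k₀ - A k₀ := by
      have := min_le_left (B k₀) 1
      rw [hclip_def]; linarith
    have h2 : B k₀ - A k₀ = D * (v - 1) := by rw [hBv, hD_def]; ring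
    have h3 : D * (v - 1) ≤ 1 * (v - 1) :=
      mul_le_mul_of_nonneg_right hD1 (sub_nonneg.2 hv1')
    have h3' : (1:ℝ) * (v - 1) = v - 1 := one_mul _
    have h4 : w ≤ Real.exp π := by rw [hw_def]; exact Real.exp_le_exp.2 hcπ
    have h5 : w - 1 ≤ c * w := hwc
    have h6 : c * w ≤ c * Real.exp π := mul_le_mul_of_nonneg_left h4 hc0.le
    linarith
  -- conclude
  have hgoal_rhs : 2 * π * Real.exp π * (1 / T₁) = Real.exp π * c := by
    rw [hc_def]; field_simp
  rw [hgoal_rhs, htoReal, hQ_eq]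
  have he2 : (2:ℝ) ≤ Real.exp π := by
    have h1 := Real.add_one_le_exp π
    have h2 := Real.pi_gt_three
    linarith
  rw [abs_le]
  constructor
  · have h7 : 2 * c ≤ Real.exp π * c := mul_le_mul_of_nonneg_right he2 hc0.le
    linarith
  · have h8 : 1 * c ≤ Real.exp π * c :=
      mul_le_mul_of_nonneg_right (by linarith) hc0.le
    have h9 : (1:ℝ) * c = c := one_mul c
    linarith
end

section
/- If S ⊆ ℕ satisfies d({n : 1_{n∈S} ≠ 1_{pn∈S}}) = 0 for every prime p, then d({n : 1_{n∈S} ≠ 1_{mn∈S}}) = 0 for every positive integer m. -/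
open Classical in
/-- The number of elements of `A` in `[1, N]`. -/
noncomputable def countIn (A : Set ℕ) (N : ℕ) : ℕ :=
  ((Finset.Icc 1 N).filter (fun n => n ∈ A)).card

/-- `A ⊆ ℕ` has natural density `d`. -/
def HasNatDensity (A : Set ℕ) (d : ℝ) : Prop :=
  Filter.Tendsto (fun N : ℕ => (countIn A N : ℝ) / N) Filter.atTop (nhds d)

open Classical in
lemma countIn_mono {A B : Set ℕ} (hAB : A ⊆ B) (N : ℕ) : countIn A N ≤ countIn B N := by
  apply Finset.card_le_card
  apply Finset.monotone_filter_right
  intro n hn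
  exact fun h' => hAB h'

lemma density_zero_mono {A B : Set ℕ} (hAB : A ⊆ B) (hB : HasNatDensity B 0) :
    HasNatDensity A 0 := by
  apply squeeze_zero (g := fun N : ℕ => (countIn B N : ℝ) / N)
  · intro N; positivity
  · intro N
    gcongr
    exact_mod_cast countIn_mono hAB N
  · exact hB

open Classical in
lemma countIn_union_le (A B : Set ℕ) (N : ℕ) :
    countIn (A ∪ B) N ≤ countIn A N + countIn B N := by
  unfold countIn
  refine le_trans (Finset.card_le_card (fun x hx => ?_))
    (Finset.card_union_le ((Finset.Icc 1 N).filter (fun n => n ∈ A))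
      ((Finset.Icc 1 N).filter (fun n => n ∈ B)))
  simp only [Finset.mem_filter, Finset.mem_union, Set.mem_union] at hx ⊢
  tauto
lemma density_zero_union {A B : Set ℕ} (hA : HasNatDensity A 0) (hB : HasNatDensity B 0) :
    HasNatDensity (A ∪ B) 0 := by
  apply squeeze_zero (g := fun N : ℕ => (countIn A N : ℝ) / N + (countIn B N : ℝ) / N)
  · intro N; positivity
  · intro N
    rw [← add_div]
    gcongr ?_ / _
    exact_mod_cast countIn_union_le A B N
  · simpa using hA.add hB

open Classical in
lemma density_zero_dilate {D : Set ℕ} (hD : HasNatDensity D 0) (m : ℕ) (hm : 0 < m) :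
    HasNatDensity {n : ℕ | m * n ∈ D} 0 := by
  have hcount : ∀ N : ℕ, countIn {n : ℕ | m * n ∈ D} N ≤ countIn D (m * N) := by
    intro N
    unfold countIn
    apply Finset.card_le_card_of_injOn (fun n => m * n)
    · intro n hn
      simp only [Finset.mem_coe, Finset.mem_filter, Finset.mem_Icc, Set.mem_setOf_eq] at hn ⊢
      refine ⟨⟨Nat.one_le_iff_ne_zero.2 (Nat.mul_ne_zero hm.ne' (by omega)), Nat.mul_le_mul_left m hn.1.2⟩, hn.2⟩
    · intro a _ b _ hab
      exact Nat.eq_of_mul_eq_mul_left hm hab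
  have hlim : Filter.Tendsto (fun N : ℕ => (m : ℝ) * ((countIn D (m * N) : ℝ) / (m * N)))
      Filter.atTop (nhds 0) := by
    have h1 : Filter.Tendsto (fun N : ℕ => m * N) Filter.atTop Filter.atTop :=
      Filter.tendsto_atTop_atTop_of_monotone
        (fun a b hab => Nat.mul_le_mul_left m hab)
        (fun b => ⟨b, Nat.le_mul_of_pos_left b hm⟩)
    have := (hD.comp h1).const_mul (m : ℝ)
    simpa using this
  apply squeeze_zero (g := fun N : ℕ => (m : ℝ) * ((countIn D (m * N) : ℝ) / (m * N)))
  · intro N; positivity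
  · intro N
    rcases Nat.eq_zero_or_pos N with rfl | hN
    · simp
    · have hmN : ((m : ℝ) * N) ≠ 0 := by positivity
      have : (m : ℝ) * ((countIn D (m * N) : ℝ) / (m * N)) = (countIn D (m * N) : ℝ) / N := by
        field_simp
      rw [this]
      gcongr
      exact_mod_cast hcount N
  · exact hlim

/-- If the disagreement set of `S` under multiplication by `p` has density `0` for every
prime `p`, then it has density `0` for every positive integer `m`. -/
theorem stable_for_primes_implies_all (S : Set ℕ)
    (h : ∀ p : ℕ, p.Prime → HasNatDensity {n : ℕ | (n ∈ S) ≠ (p * n ∈ S)} 0) :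
    ∀ m : ℕ, 0 < m → HasNatDensity {n : ℕ | (n ∈ S) ≠ (m * n ∈ S)} 0 := by
  intro m
  induction m using Nat.strong_induction_on with
  | _ m ih =>
    intro hm
    rcases eq_or_lt_of_le (Nat.one_le_iff_ne_zero.2 hm.ne') with h1 | h2
    · -- m = 1
      have : {n : ℕ | (n ∈ S) ≠ (m * n ∈ S)} = ∅ := by
        ext n
        simp [← h1]
      rw [this]
      have : ∀ N, countIn (∅ : Set ℕ) N = 0 := by
        intro N; unfold countIn; simp
      unfold HasNatDensity
      simp only [this, Nat.cast_zero, zero_div]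
      exact tendsto_const_nhds
    · -- m ≥ 2
      have hm2 : 2 ≤ m := h2
      set p := m.minFac with hp
      have hpp : p.Prime := Nat.minFac_prime (by omega)
      obtain ⟨k, hk⟩ : p ∣ m := Nat.minFac_dvd m
      have hk0 : 0 < k := by
        rcases Nat.eq_zero_or_pos k with rfl | h; · omega
        exact h
      have hkm : k < m := by
        have := hpp.two_le
        nlinarith [hk]
      have hsub : {n : ℕ | (n ∈ S) ≠ (m * n ∈ S)} ⊆
          {n : ℕ | (n ∈ S) ≠ (k * n ∈ S)} ∪ {n : ℕ | k * n ∈ {j : ℕ | (j ∈ S) ≠ (p * j ∈ S)}} := by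
        intro n hn
        simp only [Set.mem_setOf_eq, Set.mem_union] at hn ⊢
        have : m * n = p * (k * n) := by rw [hk]; ring
        rw [this] at hn
        tauto
      apply density_zero_mono hsub
      exact density_zero_union (ih k hkm hk0) (density_zero_dilate (h p hpp) k hk0)
end
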